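/- arXiv:2205.08627 — 4 statements merged into one kernel-verified Lean document; each statement's English description precedes it below -/
import Mathlib

section
/- Let 𝒫_0 denote the set of distributions P of (X,Ω) on X × {0,1}^d under which X and Ω are independent, and let 𝒫_0' denote the set of distributions P for which the family (P_S : S ∈ 𝕊_P) of conditional distributions of X_S given Ω = 1_S is compatible. Then 𝒫_0 ⊆ 𝒫_0', and for every n ∈ ℕ and every measurable function ψ : (∏_{j=1}^d (X_j ∪ {⋆}))^n → [0,1], one has sup_{P ∈ 𝒫_0'} E_P ψ(X_1∘Ω_1, …, X_n∘Ω_n) = sup_{P ∈ 𝒫_0} E_P ψ(X_1∘Ω_1, …, X_n∘Ω_n), where (X_1,Ω_1), …, (X_n,Ω_n) are i.i.d. with distribution P. -/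
open MeasureTheory

/-- The natural σ-algebra on `Option α` (i.e. on `𝒳_j ∪ {⋆}`): a set is measurable iff its
trace on `α` is measurable; equivalently, the σ-algebra transported from `α ⊕ Unit`. -/
instance Option.instMeasurableSpace' {α : Type*} [m : MeasurableSpace α] :
    MeasurableSpace (Option α) := m.map some

variable {d : ℕ} {X : Fin d → Type*} [∀ j, MeasurableSpace (X j)]

/-- The observation map `(x, ω) ↦ x ∘ ω`, where entry `j` is `x_j` if `ω_j = 1` and the
missingness symbol `⋆` (here `none`) if `ω_j = 0`. -/
def obsMap (z : (∀ j, X j) × (Fin d → Bool)) : ∀ j, Option (X j) :=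
  fun j => if z.2 j then some (z.1 j) else none

/-- The indicator vector `1_S ∈ {0,1}^d` of `S ⊆ [d]`. -/
def onesOf (S : Finset (Fin d)) : Fin d → Bool := fun j => decide (j ∈ S)

/-- The conditional distribution `P_S` of `X_S` given `Ω = 1_S`. -/
noncomputable def condLaw (P : Measure ((∀ j, X j) × (Fin d → Bool))) (S : Finset (Fin d)) :
    Measure (∀ j : {i : Fin d // i ∈ S}, X j.1) :=
  (ProbabilityTheory.cond P {z | z.2 = onesOf S}).map fun z j => z.1 j.1

/-- `𝒫₀`: the set of (probability) distributions of `(X, Ω)` under which `X ⫫ Ω`,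
i.e. the MCAR null hypothesis. -/
def MCARSet (X : Fin d → Type*) [∀ j, MeasurableSpace (X j)] :
    Set (Measure ((∀ j, X j) × (Fin d → Bool))) :=
  {P | IsProbabilityMeasure P ∧ P = (P.map Prod.fst).prod (P.map Prod.snd)}

/-- `𝒫₀'`: the set of (probability) distributions of `(X, Ω)` for which the family
`(P_S : S ∈ 𝕊_P)` of conditional distributions is compatible, i.e. there is one probability
measure `Q` on `𝒳` whose margin on `𝒳_S` is `P_S` for every observable pattern `S`. -/
def CompatSet (X : Fin d → Type*) [∀ j, MeasurableSpace (X j)] :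
    Set (Measure ((∀ j, X j) × (Fin d → Bool))) :=
  {P | IsProbabilityMeasure P ∧ ∃ Q : Measure (∀ j, X j), IsProbabilityMeasure Q ∧
    ∀ S : Finset (Fin d), P {z | z.2 = onesOf S} ≠ 0 →
      Q.map (fun x (j : {i : Fin d // i ∈ S}) => x j.1) = condLaw P S}

/-- `E_P ψ(X₁ ∘ Ω₁, …, X_n ∘ Ω_n)` for i.i.d. data with common law `P`. -/
noncomputable def expTest (n : ℕ) (ψ : (Fin n → ∀ j, Option (X j)) → ℝ)
    (P : Measure ((∀ j, X j) × (Fin d → Bool))) : ℝ :=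
  ∫ z, ψ z ∂(Measure.pi fun _ : Fin n => P.map obsMap)

-- auxiliary defs
lemma measurable_some' {α : Type*} [MeasurableSpace α] : Measurable (some : α → Option α) :=
  fun _ ht => ht

def eMap (S : Finset (Fin d)) (y : ∀ j : {i : Fin d // i ∈ S}, X j.1) : ∀ j, Option (X j) :=
  fun j => if h : j ∈ S then some (y ⟨j, h⟩) else none

def rX (S : Finset (Fin d)) (x : ∀ j, X j) : ∀ j : {i : Fin d // i ∈ S}, X j.1 :=
  fun j => x j.1

def patSet (X : Fin d → Type*) (S : Finset (Fin d)) : Set ((∀ j, X j) × (Fin d → Bool)) :=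
  {z | z.2 = onesOf S}

lemma measurable_eMap (S : Finset (Fin d)) : Measurable (eMap (X := X) S) := by
  apply measurable_pi_lambda
  intro j
  by_cases h : j ∈ S
  · simp only [eMap, dif_pos h]
    exact measurable_some'.comp (measurable_pi_apply _)
  · simp only [eMap, dif_neg h]
    exact measurable_const

lemma measurable_rX (S : Finset (Fin d)) : Measurable (rX (X := X) S) :=
  measurable_pi_lambda _ fun j => measurable_pi_apply _

lemma measurable_obsMap : Measurable (obsMap (X := X)) := by
  apply measurable_pi_lambda
  intro j
  apply Measurable.ite (p := fun z : (∀ j, X j) × (Fin d → Bool) => z.2 j = true)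
  · have h1 : Measurable fun z : (∀ j, X j) × (Fin d → Bool) => z.2 j :=
      (measurable_pi_apply j).comp measurable_snd
    exact h1 (measurableSet_singleton true)
  · exact measurable_some'.comp ((measurable_pi_apply j).comp measurable_fst)
  · exact measurable_const

lemma measurableSet_patSet (S : Finset (Fin d)) : MeasurableSet (patSet X S) :=
  measurable_snd (measurableSet_singleton (onesOf S))

lemma onesOf_injective : Function.Injective (onesOf (d := d)) := by
  intro S T h
  ext j
  have := congrFun h j
  simpa [onesOf] using this

lemma obs_eq_of_mem {S : Finset (Fin d)} {z : (∀ j, X j) × (Fin d → Bool)}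
    (hz : z ∈ patSet X S) : obsMap z = eMap S (rX S z.1) := by
  funext j
  by_cases h : j ∈ S
  · have : z.2 j = true := by simp [patSet] at hz; simp [hz, onesOf, h]
    simp [obsMap, eMap, rX, this, h]
  · have : z.2 j = false := by simp [patSet] at hz; simp [hz, onesOf, h]
    simp [obsMap, eMap, this, h]

lemma obs_inter_pat (S : Finset (Fin d)) {t : Set (∀ j, Option (X j))} :
    obsMap ⁻¹' t ∩ patSet X S = (rX S ∘ Prod.fst) ⁻¹' (eMap S ⁻¹' t) ∩ patSet X S := by
  ext z
  simp only [Set.mem_inter_iff, Set.mem_preimage, Function.comp_apply, and_congr_left_iff]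
  intro hz
  rw [obs_eq_of_mem hz]

lemma obs_inter_pat_prod (S : Finset (Fin d)) {t : Set (∀ j, Option (X j))} :
    obsMap ⁻¹' t ∩ patSet X S = ((rX S ⁻¹' (eMap S ⁻¹' t)) ×ˢ ({onesOf S} : Set (Fin d → Bool))) := by
  rw [obs_inter_pat]
  ext z
  simp only [Set.mem_inter_iff, Set.mem_preimage, Function.comp_apply, Set.mem_prod,
    Set.mem_singleton_iff, patSet, Set.mem_setOf_eq]

lemma partition_sum (μ : Measure ((∀ j, X j) × (Fin d → Bool))) {s : Set ((∀ j, X j) × (Fin d → Bool))}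
    (hs : MeasurableSet s) : μ s = ∑ S : Finset (Fin d), μ (s ∩ patSet X S) := by
  have hcover : (⋃ S ∈ (Finset.univ : Finset (Finset (Fin d))), s ∩ patSet X S) = s := by
    ext z
    simp only [Set.mem_iUnion, Finset.mem_univ, Set.mem_inter_iff, exists_prop, true_and]
    constructor
    · rintro ⟨S, hzs, _⟩; exact hzs
    · intro hzs
      refine ⟨Finset.univ.filter (fun j => z.2 j = true), hzs, ?_⟩
      simp only [patSet, Set.mem_setOf_eq]
      funext j
      simp only [onesOf, Finset.mem_filter, Finset.mem_univ, true_and]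
      cases h : z.2 j <;> simp [h]
  have hdisj : ((Finset.univ : Finset (Finset (Fin d))) : Set (Finset (Fin d))).PairwiseDisjoint
      (fun S => s ∩ patSet X S) := by
    intro S _ T _ hST
    apply Set.disjoint_left.mpr
    rintro z ⟨_, hzS⟩ ⟨_, hzT⟩
    exact hST (onesOf_injective (hzS.symm.trans hzT))
  conv_lhs => rw [← hcover]
  rw [measure_biUnion_finset hdisj fun S _ => hs.inter (measurableSet_patSet S)]

lemma condLaw_apply (P : Measure ((∀ j, X j) × (Fin d → Bool))) (S : Finset (Fin d))
    {u : Set (∀ j : {i : Fin d // i ∈ S}, X j.1)} (hu : MeasurableSet u) :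
    condLaw P S u = (P (patSet X S))⁻¹ * P (patSet X S ∩ (rX S ∘ Prod.fst) ⁻¹' u) := by
  have hf : Measurable (fun (z : (∀ j, X j) × (Fin d → Bool)) (j : {i : Fin d // i ∈ S}) =>
      z.1 j.1) := (measurable_rX S).comp measurable_fst
  have hpat : ({z : (∀ j, X j) × (Fin d → Bool) | z.2 = onesOf S}) = patSet X S := rfl
  rw [condLaw, hpat, Measure.map_apply hf hu,
    ProbabilityTheory.cond_apply (measurableSet_patSet S)]
  rfl

-- key term computation for a compatible P
lemma term_eq (P : Measure ((∀ j, X j) × (Fin d → Bool))) [IsProbabilityMeasure P]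
    (S : Finset (Fin d)) {t : Set (∀ j, Option (X j))} (ht : MeasurableSet t) :
    P (obsMap ⁻¹' t ∩ patSet X S) = P (patSet X S) * condLaw P S (eMap S ⁻¹' t) := by
  rw [condLaw_apply P S ((measurable_eMap S) ht), obs_inter_pat]
  rcases eq_or_ne (P (patSet X S)) 0 with h0 | h0
  · rw [h0, zero_mul]
    exact measure_mono_null Set.inter_subset_right h0
  · rw [← mul_assoc, ENNReal.mul_inv_cancel h0 (measure_ne_top P _), one_mul, Set.inter_comm]

lemma map_snd_apply (P : Measure ((∀ j, X j) × (Fin d → Bool))) (S : Finset (Fin d)) :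
    P.map Prod.snd {onesOf S} = P (patSet X S) := by
  rw [Measure.map_apply measurable_snd (measurableSet_singleton _)]
  rfl

lemma pat_inter_prod (S : Finset (Fin d)) {u : Set (∀ j : {i : Fin d // i ∈ S}, X j.1)} :
    patSet X S ∩ (rX S ∘ Prod.fst) ⁻¹' u
      = (rX S ⁻¹' u) ×ˢ ({onesOf S} : Set (Fin d → Bool)) := by
  ext z
  simp only [Set.mem_inter_iff, Set.mem_preimage, Function.comp_apply, Set.mem_prod,
    Set.mem_singleton_iff, patSet, Set.mem_setOf_eq]
  tauto

lemma compat_map_obsMap (P : Measure ((∀ j, X j) × (Fin d → Bool)))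
    (hP : P ∈ CompatSet X) :
    ∃ P₀ ∈ MCARSet X, Measure.map (obsMap (X := X)) P₀ = P.map obsMap := by
  obtain ⟨hPprob, Q, hQprob, hcomp⟩ := hP
  haveI := hPprob; haveI := hQprob
  haveI : IsProbabilityMeasure (P.map Prod.snd) :=
    Measure.isProbabilityMeasure_map measurable_snd.aemeasurable
  refine ⟨Q.prod (P.map Prod.snd), ⟨inferInstance, ?_⟩, ?_⟩
  · rw [Measure.map_fst_prod, Measure.map_snd_prod]
    simp [measure_univ]
  · refine Measure.ext fun t ht => ?_
    rw [Measure.map_apply measurable_obsMap ht, Measure.map_apply measurable_obsMap ht,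
      partition_sum _ (measurable_obsMap ht), partition_sum _ (measurable_obsMap ht)]
    refine Finset.sum_congr rfl fun S _ => ?_
    rw [term_eq P S ht, obs_inter_pat_prod, Measure.prod_prod, map_snd_apply]
    rcases eq_or_ne (P (patSet X S)) 0 with h0 | h0
    · simp [h0]
    · have hc : Q.map (rX S) = condLaw P S := hcomp S h0
      have hu := (measurable_eMap S) ht
      rw [← Measure.map_apply (measurable_rX S) hu, hc, mul_comm]

lemma mcar_subset : MCARSet X ⊆ CompatSet X := by
  intro P hP
  obtain ⟨hprob, hfact⟩ := hP
  haveI := hprob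
  haveI : IsProbabilityMeasure (P.map (Prod.fst :
      ((∀ j, X j) × (Fin d → Bool)) → ∀ j, X j)) :=
    Measure.isProbabilityMeasure_map measurable_fst.aemeasurable
  haveI : IsProbabilityMeasure (P.map (Prod.snd :
      ((∀ j, X j) × (Fin d → Bool)) → Fin d → Bool)) :=
    Measure.isProbabilityMeasure_map measurable_snd.aemeasurable
  refine ⟨hprob, P.map Prod.fst,
    Measure.isProbabilityMeasure_map measurable_fst.aemeasurable, fun S hS => ?_⟩
  have hS' : P (patSet X S) ≠ 0 := hS
  have hν : (P.map Prod.snd) {onesOf S} ≠ 0 := by rwa [map_snd_apply]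
  refine Measure.ext fun u hu => ?_
  have h1 : (Measure.map (fun x (j : {i : Fin d // i ∈ S}) => x j.1) (P.map Prod.fst)) u
      = P.map Prod.fst (rX S ⁻¹' u) := Measure.map_apply (measurable_rX S) hu
  rw [h1, condLaw_apply P S hu, pat_inter_prod]
  have hpat : patSet X S = (Set.univ : Set (∀ j, X j)) ×ˢ ({onesOf S} : Set (Fin d → Bool)) := by
    ext z
    simp only [patSet, Set.mem_setOf_eq, Set.mem_prod, Set.mem_univ, true_and,
      Set.mem_singleton_iff]
  rw [hpat]
  conv_rhs => rw [hfact]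
  rw [Measure.prod_prod, Measure.prod_prod, measure_univ, one_mul, mul_comm,
    mul_assoc, ENNReal.mul_inv_cancel hν (measure_ne_top _ _), mul_one]


/-- Proposition: compatibility characterises the detectable alternatives to
MCAR: `𝒫₀ ⊆ 𝒫₀'`, and every test has the same supremal rejection probability over `𝒫₀'`
as over `𝒫₀`. -/
theorem statement_0 {d : ℕ} {X : Fin d → Type*} [∀ j, MeasurableSpace (X j)]
    (n : ℕ) (ψ : (Fin n → ∀ j, Option (X j)) → ℝ)
    (hψ : Measurable ψ) (hψ01 : ∀ z, ψ z ∈ Set.Icc (0 : ℝ) 1) :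
    MCARSet X ⊆ CompatSet X ∧
      sSup (expTest n ψ '' CompatSet X) = sSup (expTest n ψ '' MCARSet X) := by
  refine ⟨mcar_subset, ?_⟩
  have himg : expTest n ψ '' CompatSet X = expTest n ψ '' MCARSet X := by
    apply Set.Subset.antisymm
    · rintro x ⟨P, hP, rfl⟩
      obtain ⟨P₀, hP₀, heq⟩ := compat_map_obsMap P hP
      exact ⟨P₀, hP₀, by simp only [expTest, heq]⟩
    · exact Set.image_mono mcar_subset
  rw [himg]
end

section
/- Fix α, β ∈ (0,1) and set C_α = (1/2) ∑_{S∈𝕊} ((|X_S|−1)/n_S)^{1/2} + ((1/2) log(1/α) ∑_{S∈𝕊} 1/n_S)^{1/2}, and analogously C_β. Then: (i) whenever P_𝕊 ∈ 𝒫_𝕊^0, ℙ(R(P̂_𝕊) ≥ C_α) ≤ α; and (ii) whenever P_𝕊 ∈ 𝒫_𝕊 satisfies R(P_𝕊) ≥ C_α + C_β, we have ℙ(R(P̂_𝕊) ≥ C_α) ≥ 1 − β. -/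
open Finset

/-- The space `𝒳_S = ∏_{j ∈ S} [m_j]`. -/
abbrev Cell {d : ℕ} (m : Fin d → ℕ) (S : Finset (Fin d)) : Type :=
  ∀ j : {x : Fin d // x ∈ S}, Fin (m j.1)

/-- The full space `𝒳 = ∏_{j=1}^d [m_j]`. -/
abbrev Full {d : ℕ} (m : Fin d → ℕ) : Type := ∀ j, Fin (m j)

/-- Coordinate projection `x ↦ x_S`. -/
def proj {d : ℕ} (m : Fin d → ℕ) (S : Finset (Fin d)) (x : Full m) : Cell m S :=
  fun j => x j.1

/-- Coordinate projection `𝒳_S → 𝒳_T` for `T ⊆ S`. -/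
def projSub {d : ℕ} (m : Fin d → ℕ) {S T : Finset (Fin d)} (h : T ⊆ S) (z : Cell m S) :
    Cell m T :=
  fun j => z ⟨j.1, h j.2⟩

/-- `p` is a probability mass function. -/
def IsPMF {α : Type*} [Fintype α] (p : α → ℝ) : Prop :=
  (∀ x, 0 ≤ p x) ∧ ∑ x, p x = 1

/-- `p` is a family of probability mass functions indexed by `𝕊`. -/
def IsFamily {d : ℕ} (m : Fin d → ℕ) (𝕊 : Finset (Finset (Fin d)))
    (p : ∀ S : Finset (Fin d), Cell m S → ℝ) : Prop :=
  ∀ S ∈ 𝕊, IsPMF (p S)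

/-- The family `P_𝕊` is compatible: there is a joint pmf on `𝒳` with the given margins. -/
def Compatible {d : ℕ} (m : Fin d → ℕ) (𝕊 : Finset (Finset (Fin d)))
    (p : ∀ S : Finset (Fin d), Cell m S → ℝ) : Prop :=
  ∃ q : Full m → ℝ, IsPMF q ∧
    ∀ S ∈ 𝕊, ∀ y : Cell m S, p S y = ∑ x : Full m, if proj m S x = y then q x else 0

/-- The marginal mass function of `pS` on `𝒳_T`, for `T ⊆ S`. -/
noncomputable def marg {d : ℕ} (m : Fin d → ℕ) {S : Finset (Fin d)} (T : Finset (Fin d)) (h : T ⊆ S)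
    (pS : Cell m S → ℝ) (y : Cell m T) : ℝ :=
  ∑ z : Cell m S, if projSub m h z = y then pS z else 0

/-- The family `P_𝕊` is consistent: overlapping margins agree. -/
def Consistent {d : ℕ} (m : Fin d → ℕ) (𝕊 : Finset (Finset (Fin d)))
    (p : ∀ S : Finset (Fin d), Cell m S → ℝ) : Prop :=
  ∀ S₁ ∈ 𝕊, ∀ S₂ ∈ 𝕊, (S₁ ∩ S₂).Nonempty →
    marg m (S₁ ∩ S₂) inter_subset_left (p S₁) =
      marg m (S₁ ∩ S₂) inter_subset_right (p S₂)

/-- The class `𝒢_𝕊^+`. -/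
def GPlus {d : ℕ} (m : Fin d → ℕ) (𝕊 : Finset (Finset (Fin d)))
    (f : ∀ S : Finset (Fin d), Cell m S → ℝ) : Prop :=
  (∀ S ∈ 𝕊, ∀ y, -1 ≤ f S y) ∧ ∀ x : Full m, 0 ≤ ∑ S ∈ 𝕊, f S (proj m S x)

/-- The linear functional `R(P_𝕊, f_𝕊)`. -/
noncomputable def RL {d : ℕ} (m : Fin d → ℕ) (𝕊 : Finset (Finset (Fin d)))
    (p f : ∀ S : Finset (Fin d), Cell m S → ℝ) : ℝ :=
  -(1 / (𝕊.card : ℝ)) * ∑ S ∈ 𝕊, ∑ y, f S y * p S y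

/-- The incompatibility index `R(P_𝕊)`. -/
noncomputable def Rix {d : ℕ} (m : Fin d → ℕ) (𝕊 : Finset (Finset (Fin d)))
    (p : ∀ S : Finset (Fin d), Cell m S → ℝ) : ℝ :=
  sSup {t | ∃ f, GPlus m 𝕊 f ∧ t = RL m 𝕊 p f}

/-- Total variation distance between two mass functions on a finite space. -/
noncomputable def dTV {α : Type*} [Fintype α] (p q : α → ℝ) : ℝ :=
  sSup {t | ∃ A : Finset α, t = |∑ y ∈ A, (p y - q y)|}

/-- Sample space: independent samples `X_{S,i}`, `i ∈ [n_S]`, for each `S ∈ 𝕊`. -/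
abbrev Samples {d : ℕ} (m : Fin d → ℕ) (𝕊 : Finset (Finset (Fin d)))
    (n : Finset (Fin d) → ℕ) : Type :=
  ∀ S : {T : Finset (Fin d) // T ∈ 𝕊}, Fin (n S.1) → Cell m S.1

/-- Joint mass of a sample under independence, `X_{S,i} ∼ P_S`. -/
noncomputable def jointMass {d : ℕ} (m : Fin d → ℕ) (𝕊 : Finset (Finset (Fin d)))
    (n : Finset (Fin d) → ℕ) (p : ∀ S : Finset (Fin d), Cell m S → ℝ)
    (ω : Samples m 𝕊 n) : ℝ :=
  ∏ S : {T : Finset (Fin d) // T ∈ 𝕊}, ∏ i, p S.1 (ω S i)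

/-- Probability of an event under the joint law of the data. -/
noncomputable def Prob {d : ℕ} (m : Fin d → ℕ) (𝕊 : Finset (Finset (Fin d)))
    (n : Finset (Fin d) → ℕ) (p : ∀ S : Finset (Fin d), Cell m S → ℝ)
    (E : Set (Samples m 𝕊 n)) : ℝ :=
  ∑ ω : Samples m 𝕊 n, E.indicator (jointMass m 𝕊 n p) ω

/-- The empirical family `P̂_𝕊` built from the data (arbitrarily extended off `𝕊`). -/
noncomputable def emp {d : ℕ} (m : Fin d → ℕ) (𝕊 : Finset (Finset (Fin d)))
    (n : Finset (Fin d) → ℕ) (p : ∀ S : Finset (Fin d), Cell m S → ℝ)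
    (ω : Samples m 𝕊 n) : ∀ S : Finset (Fin d), Cell m S → ℝ :=
  fun S y =>
    if h : S ∈ 𝕊 then
      (n S : ℝ)⁻¹ * ((Finset.univ.filter fun i => ω ⟨S, h⟩ i = y).card : ℝ)
    else p S y

/-- The universal critical value `C_α`. -/
noncomputable def Calpha {d : ℕ} (m : Fin d → ℕ) (𝕊 : Finset (Finset (Fin d)))
    (n : Finset (Fin d) → ℕ) (α : ℝ) : ℝ :=
  (1 / 2) * ∑ S ∈ 𝕊, Real.sqrt (((Fintype.card (Cell m S) : ℝ) - 1) / (n S : ℝ)) +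
    Real.sqrt ((1 / 2) * Real.log (1 / α) * ∑ S ∈ 𝕊, 1 / (n S : ℝ))


open Real

lemma keyD_pos {p : ℝ} (hp0 : 0 ≤ p) (hp1 : p ≤ 1) (u : ℝ) : 0 < 1 - p + p * Real.exp u := by
  rcases eq_or_lt_of_le hp1 with h | h
  · subst h; simpa using Real.exp_pos u
  · have : 0 ≤ p * Real.exp u := mul_nonneg hp0 (Real.exp_pos u).le
    linarith

lemma key_analytic {p : ℝ} (hp0 : 0 ≤ p) (hp1 : p ≤ 1) (u : ℝ) :
    1 - p + p * Real.exp u ≤ Real.exp (p * u + u ^ 2 / 8) := by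
  set D : ℝ → ℝ := fun u => 1 - p + p * Real.exp u with hD
  have hDpos : ∀ u, 0 < D u := fun u => keyD_pos hp0 hp1 u
  set g : ℝ → ℝ := fun u => p * u + u ^ 2 / 8 - Real.log (D u) with hgdef
  set g' : ℝ → ℝ := fun u => p + u / 4 - p * Real.exp u / D u with hg'def
  have hDd : ∀ u, HasDerivAt D (p * Real.exp u) u := by
    intro u
    exact ((Real.hasDerivAt_exp u).const_mul p).const_add (1 - p)
  have hgd : ∀ u, HasDerivAt g (g' u) u := by
    intro u
    have hlog : HasDerivAt (fun u => Real.log (D u)) (p * Real.exp u / D u) u :=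
      (hDd u).log (hDpos u).ne'
    have h1 : HasDerivAt (fun u : ℝ => p * u + u ^ 2 / 8) (p + u * 2 / 8) u := by
      have := ((hasDerivAt_pow 2 u).div_const 8).const_add (p * u)
      have h2 : HasDerivAt (fun u : ℝ => p * u) p u := by
        simpa using (hasDerivAt_id u).const_mul p
      exact (h2.add ((hasDerivAt_pow 2 u).div_const 8)).congr_deriv
        (by rw [show (2:ℕ) - 1 = 1 from rfl, pow_one]; push_cast; ring)
    have := h1.sub hlog
    exact this.congr_deriv (by simp only [hg'def]; ring)
  have hg'd : ∀ u, HasDerivAt g' (1 / 4 - p * Real.exp u * (1 - p) / (D u) ^ 2) u := by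
    intro u
    have hq : HasDerivAt (fun u => p * Real.exp u / D u)
        ((p * Real.exp u * D u - p * Real.exp u * (p * Real.exp u)) / (D u) ^ 2) u := by
      exact ((Real.hasDerivAt_exp u).const_mul p).div (hDd u) (hDpos u).ne'
    have h1 : HasDerivAt (fun u : ℝ => p + u / 4) (1 / 4) u := by
      simpa using ((hasDerivAt_id u).div_const 4).const_add p
    have := h1.sub hq
    have hD' : D u = 1 - p + p * Real.exp u := rfl
    exact this.congr_deriv (by rw [hD']; ring)
  have hg'nonneg : ∀ u, 0 ≤ 1 / 4 - p * Real.exp u * (1 - p) / (D u) ^ 2 := by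
    intro u
    have h1 : 0 < (D u) ^ 2 := pow_pos (hDpos u) 2
    rw [sub_nonneg, div_le_iff₀ h1]
    have hq : p * Real.exp u * (1 - p) = (p * Real.exp u) * (D u - p * Real.exp u) := by
      simp only [hD]; ring
    rw [hq]
    generalize hE : p * Real.exp u = E
    generalize hDD : D u = Dv
    nlinarith [sq_nonneg (Dv - 2 * E)]
  have hg'mono : Monotone g' := by
    have hdiff : Differentiable ℝ g' := fun u => (hg'd u).differentiableAt
    apply monotone_of_deriv_nonneg hdiff
    intro u
    rw [(hg'd u).deriv]
    exact hg'nonneg u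
  have hg'0 : g' 0 = 0 := by
    simp only [hg'def, hD]
    simp
  have hgdiff : Differentiable ℝ g := fun u => (hgd u).differentiableAt
  have hgderiv : deriv g = g' := funext fun u => (hgd u).deriv
  have hg0 : g 0 = 0 := by
    simp only [hgdef, hD]
    simp
  have hgnonneg : ∀ u, 0 ≤ g u := by
    intro u
    rcases le_total 0 u with h | h
    · have : MonotoneOn g (Set.Ici 0) := by
        apply monotoneOn_of_deriv_nonneg (convex_Ici 0) hgdiff.continuous.continuousOn
          (fun x _ => (hgdiff x).differentiableWithinAt)
        intro x hx
        rw [hgderiv]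
        rw [← hg'0]
        exact hg'mono (le_of_lt (by simpa using hx))
      have := this (Set.mem_Ici.2 le_rfl) (Set.mem_Ici.2 h) h
      linarith [hg0 ▸ this]
    · have : AntitoneOn g (Set.Iic 0) := by
        apply antitoneOn_of_deriv_nonpos (convex_Iic 0) hgdiff.continuous.continuousOn
          (fun x _ => (hgdiff x).differentiableWithinAt)
        intro x hx
        rw [hgderiv]
        rw [← hg'0]
        exact hg'mono (le_of_lt (by simpa using hx))
      have := this (Set.mem_Iic.2 h) (Set.mem_Iic.2 le_rfl) h
      linarith [hg0 ▸ this]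
  have := hgnonneg u
  have hlog : Real.log (D u) ≤ p * u + u ^ 2 / 8 := by
    simp only [hgdef] at this; linarith
  calc D u = Real.exp (Real.log (D u)) := (Real.exp_log (hDpos u)).symm
    _ ≤ Real.exp (p * u + u ^ 2 / 8) := Real.exp_le_exp.2 hlog
open Finset in
lemma hoeffding_core {κ : Type*} [Fintype κ] (w : κ → ℝ) (hw0 : ∀ x, 0 ≤ w x)
    (hw1 : ∑ x, w x = 1) (v : κ → ℝ) (c l : ℝ)
    (hosc : ∀ x y, v x - v y ≤ c) :
    ∑ x, w x * Real.exp (l * v x) ≤ Real.exp (l ^ 2 * c ^ 2 / 8 + l * ∑ x, w x * v x) := by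
  have hne : Nonempty κ := by
    by_contra h
    rw [not_nonempty_iff] at h
    rw [Finset.sum_eq_zero (fun x _ => (h.false x).elim)] at hw1
    norm_num at hw1
  inhabit κ
  have hc0 : 0 ≤ c := le_trans (by simp) (hosc default default)
  set μ : ℝ := ∑ x, w x * v x with hμ
  set h : κ → ℝ := fun x => v x - μ with hh
  have hsum0 : ∑ x, w x * h x = 0 := by
    simp only [hh, mul_sub, Finset.sum_sub_distrib, ← Finset.sum_mul, hw1]
    ring
  -- reduce to centered version
  have hred : (∑ x, w x * Real.exp (l * h x)) ≤ Real.exp (l ^ 2 * c ^ 2 / 8) →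
      ∑ x, w x * Real.exp (l * v x) ≤ Real.exp (l ^ 2 * c ^ 2 / 8 + l * μ) := by
    intro H
    have : ∀ x, w x * Real.exp (l * v x) = (w x * Real.exp (l * h x)) * Real.exp (l * μ) := by
      intro x
      rw [mul_assoc, ← Real.exp_add]
      simp only [hh]
      ring_nf
    rw [Finset.sum_congr rfl (fun x _ => this x), ← Finset.sum_mul, Real.exp_add]
    exact mul_le_mul_of_nonneg_right H (Real.exp_pos _).le
  apply hred
  set a : ℝ := Finset.univ.inf' Finset.univ_nonempty h with ha
  set b : ℝ := Finset.univ.sup' Finset.univ_nonempty h with hb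
  have hax : ∀ x, a ≤ h x := fun x => Finset.inf'_le _ (Finset.mem_univ x)
  have hxb : ∀ x, h x ≤ b := fun x => Finset.le_sup' _ (Finset.mem_univ x)
  have hba : b - a ≤ c := by
    obtain ⟨x0, -, hx0⟩ := Finset.exists_mem_eq_inf' Finset.univ_nonempty h
    obtain ⟨y0, -, hy0⟩ := Finset.exists_mem_eq_sup' Finset.univ_nonempty h
    have e1 : a = h x0 := hx0
    have e2 : b = h y0 := hy0
    have := hosc y0 x0
    rw [e1, e2]
    simp only [hh]
    linarith
  have ha0 : a ≤ 0 := by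
    have : ∑ x, w x * a ≤ ∑ x, w x * h x :=
      Finset.sum_le_sum (fun x _ => mul_le_mul_of_nonneg_left (hax x) (hw0 x))
    rw [hsum0, ← Finset.sum_mul, hw1, one_mul] at this
    exact this
  have h0b : 0 ≤ b := by
    have : ∑ x, w x * h x ≤ ∑ x, w x * b :=
      Finset.sum_le_sum (fun x _ => mul_le_mul_of_nonneg_left (hxb x) (hw0 x))
    rw [hsum0, ← Finset.sum_mul, hw1, one_mul] at this
    exact this
  rcases eq_or_lt_of_le (le_trans (hax default) (hxb default) : a ≤ b) with hab | hab
  · -- degenerate: h is constant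
    have hconst : ∀ x, h x = a := fun x => le_antisymm (hab ▸ hxb x) (hax x)
    have ha' : a = 0 := by
      have := hsum0
      rw [Finset.sum_congr rfl (fun x _ => by rw [hconst x]), ← Finset.sum_mul, hw1,
        one_mul] at this
      exact this
    have : ∑ x, w x * Real.exp (l * h x) = 1 := by
      rw [Finset.sum_congr rfl (fun x _ => by rw [hconst x, ha'])]
      simp [hw1]
    rw [this, show (1 : ℝ) = Real.exp 0 by simp]
    apply Real.exp_le_exp.2
    positivity
  · have hbapos : 0 < b - a := by linarith
    set pp : ℝ := -a / (b - a) with hpp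
    have hpp0 : 0 ≤ pp := div_nonneg (by linarith) hbapos.le
    have hpp1 : pp ≤ 1 := by
      rw [hpp, div_le_one hbapos]
      linarith
    set u : ℝ := l * (b - a) with hu
    -- pointwise convexity bound
    have hconv : ∀ x, Real.exp (l * h x) ≤
        (1 - (h x - a) / (b - a)) * Real.exp (l * a) + ((h x - a) / (b - a)) * Real.exp (l * b) := by
      intro x
      set t : ℝ := (h x - a) / (b - a) with ht
      have ht0 : 0 ≤ t := div_nonneg (by linarith [hax x]) hbapos.le
      have ht1 : t ≤ 1 := by
        rw [ht, div_le_one hbapos]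
        linarith [hxb x]
      have hcomb : l * h x = (1 - t) * (l * a) + t * (l * b) := by
        have : h x = (1 - t) * a + t * b := by
          rw [ht]; field_simp
          ring
        rw [this]; ring
      rw [hcomb]
      exact convexOn_exp.2 (Set.mem_univ _) (Set.mem_univ _) (by linarith) ht0 (by ring)
    have hstep : ∑ x, w x * Real.exp (l * h x) ≤
        (1 - pp) * Real.exp (l * a) + pp * Real.exp (l * b) := by
      calc ∑ x, w x * Real.exp (l * h x)
          ≤ ∑ x, w x * ((1 - (h x - a) / (b - a)) * Real.exp (l * a) +
              ((h x - a) / (b - a)) * Real.exp (l * b)) :=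
            Finset.sum_le_sum (fun x _ => mul_le_mul_of_nonneg_left (hconv x) (hw0 x))
        _ = (1 - pp) * Real.exp (l * a) + pp * Real.exp (l * b) := by
            have e1 : ∑ x, w x * (h x - a) = -a := by
              simp only [mul_sub, Finset.sum_sub_distrib, hsum0, ← Finset.sum_mul, hw1]
              ring
            have : ∀ x, w x * ((1 - (h x - a) / (b - a)) * Real.exp (l * a) +
                ((h x - a) / (b - a)) * Real.exp (l * b)) =
                (w x - (w x * (h x - a)) / (b - a)) * Real.exp (l * a) +
                  ((w x * (h x - a)) / (b - a)) * Real.exp (l * b) := by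
              intro x; field_simp
            rw [Finset.sum_congr rfl (fun x _ => this x)]
            rw [Finset.sum_add_distrib, ← Finset.sum_mul, ← Finset.sum_mul,
              Finset.sum_sub_distrib, ← Finset.sum_div, e1, hw1, hpp]
    -- now the analytic bound
    have hkey : (1 - pp) * Real.exp (l * a) + pp * Real.exp (l * b) ≤
        Real.exp (l ^ 2 * c ^ 2 / 8) := by
      have hfac : (1 - pp) * Real.exp (l * a) + pp * Real.exp (l * b) =
          Real.exp (l * a) * (1 - pp + pp * Real.exp u) := by
        rw [show l * b = l * a + u by rw [hu]; ring, Real.exp_add]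
        ring
      rw [hfac]
      have h1 : 1 - pp + pp * Real.exp u ≤ Real.exp (pp * u + u ^ 2 / 8) :=
        key_analytic hpp0 hpp1 u
      have h2 : Real.exp (l * a) * (1 - pp + pp * Real.exp u) ≤
          Real.exp (l * a) * Real.exp (pp * u + u ^ 2 / 8) :=
        mul_le_mul_of_nonneg_left h1 (Real.exp_pos _).le
      refine le_trans h2 ?_
      rw [← Real.exp_add]
      apply Real.exp_le_exp.2
      have hppu : pp * u = -(l * a) := by
        rw [hpp, hu]
        field_simp
      have husq : u ^ 2 ≤ l ^ 2 * c ^ 2 := by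
        rw [hu, mul_pow]
        have : (b - a) ^ 2 ≤ c ^ 2 := by nlinarith
        nlinarith [sq_nonneg l]
      rw [hppu]
      linarith
    exact le_trans hstep hkey
section ProductFramework

universe u

variable {I : Type*} [Fintype I] [DecidableEq I] {κ : I → Type u} [∀ i, Fintype (κ i)]

/-- Product mass. -/
noncomputable def pmass (w : ∀ i, κ i → ℝ) (ω : ∀ i, κ i) : ℝ := ∏ i, w i (ω i)

/-- Expectation under the product mass. -/
noncomputable def pexp (w : ∀ i, κ i → ℝ) (g : (∀ i, κ i) → ℝ) : ℝ :=
  ∑ ω, pmass w ω * g ω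

lemma pmass_nonneg {w : ∀ i, κ i → ℝ} (hw0 : ∀ i x, 0 ≤ w i x) (ω : ∀ i, κ i) :
    0 ≤ pmass w ω :=
  Finset.prod_nonneg fun i _ => hw0 i (ω i)

lemma sum_pmass {w : ∀ i, κ i → ℝ} (hw1 : ∀ i, ∑ x, w i x = 1) :
    ∑ ω : ∀ i, κ i, pmass w ω = 1 := by
  classical
  unfold pmass
  rw [← Fintype.prod_sum (fun i x => w i x)]
  simp [hw1]

lemma pexp_coord_prod (w : ∀ i, κ i → ℝ) (h : ∀ i, κ i → ℝ) :
    pexp w (fun ω => ∏ i, h i (ω i)) = ∏ i, ∑ x, w i x * h i x := by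
  classical
  rw [Fintype.prod_sum (fun i x => w i x * h i x)]
  unfold pexp pmass
  congr 1
  funext ω
  rw [← Finset.prod_mul_distrib]

lemma pexp_const {w : ∀ i, κ i → ℝ} (hw1 : ∀ i, ∑ x, w i x = 1) (a : ℝ) :
    pexp w (fun _ => a) = a := by
  unfold pexp
  rw [← Finset.sum_mul, sum_pmass hw1, one_mul]

lemma pexp_mono {w : ∀ i, κ i → ℝ} (hw0 : ∀ i x, 0 ≤ w i x) {g₁ g₂ : (∀ i, κ i) → ℝ}
    (h : ∀ ω, g₁ ω ≤ g₂ ω) : pexp w g₁ ≤ pexp w g₂ := by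
  unfold pexp
  exact Finset.sum_le_sum fun ω _ => mul_le_mul_of_nonneg_left (h ω) (pmass_nonneg hw0 ω)

lemma pexp_sum (w : ∀ i, κ i → ℝ) {s : Type*} (t : Finset s) (g : s → (∀ i, κ i) → ℝ) :
    pexp w (fun ω => ∑ j ∈ t, g j ω) = ∑ j ∈ t, pexp w (g j) := by
  unfold pexp
  rw [Finset.sum_comm]
  congr 1
  funext ω
  rw [Finset.mul_sum]

lemma pexp_smul (w : ∀ i, κ i → ℝ) (a : ℝ) (g : (∀ i, κ i) → ℝ) :
    pexp w (fun ω => a * g ω) = a * pexp w g := by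
  unfold pexp
  rw [Finset.mul_sum]
  congr 1
  funext ω
  ring


lemma pexp_coord {w : ∀ i, κ i → ℝ} (hw1 : ∀ i, ∑ x, w i x = 1) (σ : I) (f : κ σ → ℝ) :
    pexp w (fun ν => f (ν σ)) = ∑ x, w σ x * f x := by
  classical
  have h : (fun ν : ∀ i, κ i => f (ν σ)) =
      fun ν => ∏ i, Function.update (fun (τ : I) (_ : κ τ) => (1 : ℝ)) σ f i (ν i) := by
    funext ν
    rw [Finset.prod_eq_single σ]
    · simp
    · intro τ _ hτ
      rw [Function.update_of_ne hτ]
    · intro h; exact absurd (Finset.mem_univ σ) h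
  rw [h, pexp_coord_prod]
  rw [Finset.prod_eq_single σ]
  · simp
  · intro τ _ hτ
    rw [show ∑ x, w τ x * Function.update (fun (τ : I) (_ : κ τ) => (1 : ℝ)) σ f τ x
        = ∑ x, w τ x by
      congr 1; funext x; rw [Function.update_of_ne hτ]; simp, hw1 τ]
  · intro h; exact absurd (Finset.mem_univ σ) h

lemma pexp_coord_pair {w : ∀ i, κ i → ℝ} (hw1 : ∀ i, ∑ x, w i x = 1) {σ τ : I}
    (hστ : σ ≠ τ) (f : κ σ → ℝ) (g : κ τ → ℝ) :
    pexp w (fun ν => f (ν σ) * g (ν τ)) = (∑ x, w σ x * f x) * (∑ x, w τ x * g x) := by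
  classical
  set h : ∀ i, κ i → ℝ :=
    Function.update (Function.update (fun (ρ : I) (_ : κ ρ) => (1 : ℝ)) σ f) τ g with hh
  have hhσ : h σ = f := by
    rw [hh, Function.update_of_ne hστ, Function.update_self]
  have hhτ : h τ = g := Function.update_self _ _ _
  have hhother : ∀ ρ, ρ ≠ σ → ρ ≠ τ → h ρ = fun _ => (1 : ℝ) := by
    intro ρ h1 h2
    rw [hh, Function.update_of_ne h2, Function.update_of_ne h1]
  have key : (fun ν : ∀ i, κ i => f (ν σ) * g (ν τ)) = fun ν => ∏ i, h i (ν i) := by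
    funext ν
    rw [← Finset.mul_prod_erase Finset.univ _ (Finset.mem_univ τ),
      ← Finset.mul_prod_erase _ _ (Finset.mem_erase.2 ⟨hστ, Finset.mem_univ σ⟩)]
    rw [Finset.prod_eq_one]
    · rw [hhσ, hhτ]; ring
    · intro ρ hρ
      rw [Finset.mem_erase, Finset.mem_erase] at hρ
      rw [hhother ρ hρ.1 hρ.2.1]
  rw [key, pexp_coord_prod]
  rw [← Finset.mul_prod_erase Finset.univ _ (Finset.mem_univ τ),
    ← Finset.mul_prod_erase _ _ (Finset.mem_erase.2 ⟨hστ, Finset.mem_univ σ⟩)]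
  rw [Finset.prod_eq_one]
  · rw [hhσ, hhτ]; ring
  · intro ρ hρ
    rw [Finset.mem_erase, Finset.mem_erase] at hρ
    rw [show ∑ x, w ρ x * h ρ x = ∑ x, w ρ x by
      congr 1; funext x; rw [hhother ρ hρ.1 hρ.2.1]; exact mul_one _, hw1 ρ]

lemma pexp_nonneg {w : ∀ i, κ i → ℝ} (hw0 : ∀ i x, 0 ≤ w i x) {g : (∀ i, κ i) → ℝ}
    (hg : ∀ ω, 0 ≤ g ω) : 0 ≤ pexp w g :=
  Finset.sum_nonneg fun ω _ => mul_nonneg (pmass_nonneg hw0 ω) (hg ω)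

lemma pexp_abs_le_sqrt {w : ∀ i, κ i → ℝ} (hw0 : ∀ i x, 0 ≤ w i x)
    (hw1 : ∀ i, ∑ x, w i x = 1) (Z : (∀ i, κ i) → ℝ) :
    pexp w (fun ω => |Z ω|) ≤ Real.sqrt (pexp w (fun ω => Z ω ^ 2)) := by
  have habs : 0 ≤ pexp w (fun ω => |Z ω|) := pexp_nonneg hw0 (fun ω => abs_nonneg _)
  have hsq : 0 ≤ pexp w (fun ω => Z ω ^ 2) := pexp_nonneg hw0 (fun ω => sq_nonneg _)
  rw [show pexp w (fun ω => |Z ω|) = Real.sqrt ((pexp w (fun ω => |Z ω|)) ^ 2) by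
    rw [Real.sqrt_sq habs]]
  apply Real.sqrt_le_sqrt
  have := Finset.sum_mul_sq_le_sq_mul_sq Finset.univ
    (fun ω : ∀ i, κ i => Real.sqrt (pmass w ω))
    (fun ω : ∀ i, κ i => Real.sqrt (pmass w ω) * |Z ω|)
  have h1 : ∀ ω : ∀ i, κ i,
      Real.sqrt (pmass w ω) * (Real.sqrt (pmass w ω) * |Z ω|) = pmass w ω * |Z ω| := by
    intro ω
    rw [← mul_assoc, Real.mul_self_sqrt (pmass_nonneg hw0 ω)]
  have h2 : ∀ ω : ∀ i, κ i, Real.sqrt (pmass w ω) ^ 2 = pmass w ω := fun ω =>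
    Real.sq_sqrt (pmass_nonneg hw0 ω)
  have h3 : ∀ ω : ∀ i, κ i, (Real.sqrt (pmass w ω) * |Z ω|) ^ 2 = pmass w ω * Z ω ^ 2 := by
    intro ω
    rw [mul_pow, h2 ω, sq_abs]
  rw [Finset.sum_congr rfl (fun ω _ => h1 ω), Finset.sum_congr rfl (fun ω _ => h2 ω),
    Finset.sum_congr rfl (fun ω _ => h3 ω), sum_pmass hw1, one_mul] at this
  exact this

/-- McDiarmid mgf bound over `Fin N`. -/
theorem mcdiarmid_fin : ∀ (N : ℕ) (κ : Fin N → Type u) [inst : ∀ i, Fintype (κ i)]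
    (w : ∀ i, κ i → ℝ), (∀ i x, 0 ≤ w i x) → (∀ i, ∑ x, w i x = 1) →
    ∀ (g : (∀ i, κ i) → ℝ) (c : Fin N → ℝ),
    (∀ (i : Fin N) (ω : ∀ i, κ i) (x x' : κ i),
      g (Function.update ω i x) - g (Function.update ω i x') ≤ c i) →
    ∀ l : ℝ,
      pexp w (fun ω => Real.exp (l * (g ω - pexp w g))) ≤
        Real.exp (l ^ 2 * (∑ i, c i ^ 2) / 8) := by
  intro N
  induction N with
  | zero =>
    intro κ inst w hw0 hw1 g c hg l
    have huniq : ∀ ω : ∀ i : Fin 0, κ i, ω = (fun i => i.elim0) := by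
      intro ω; funext i; exact i.elim0
    have hmass : ∀ ω : ∀ i : Fin 0, κ i, pmass w ω = 1 := by
      intro ω; unfold pmass; simp
    have hexp : ∀ h : (∀ i : Fin 0, κ i) → ℝ, pexp w h = h (fun i => i.elim0) := by
      intro h
      unfold pexp
      rw [Fintype.sum_eq_single (fun i : Fin 0 => i.elim0) (fun ω hω => absurd (huniq ω) hω)]
      rw [hmass, one_mul]
    rw [hexp, hexp]
    simp
  | succ N ih =>
    intro κ inst w hw0 hw1 g c hg l
    set κ' : Fin N → Type u := fun i => κ i.succ with hκ'
    letI : ∀ i, Fintype (κ' i) := fun i => inst i.succ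
    set w' : ∀ i, κ' i → ℝ := fun i => w i.succ with hw'
    set c' : Fin N → ℝ := fun i => c i.succ with hc'
    have hw'0 : ∀ i x, 0 ≤ w' i x := fun i x => hw0 i.succ x
    have hw'1 : ∀ i, ∑ x, w' i x = 1 := fun i => hw1 i.succ
    set gbar : (∀ i, κ' i) → ℝ := fun r => ∑ x, w 0 x * g (Fin.cons x r) with hgbar
    -- sum decomposition
    have hdecomp : ∀ F : (∀ i, κ i) → ℝ,
        ∑ ω, F ω = ∑ x : κ 0, ∑ r : ∀ i, κ' i, F (Fin.cons x r) := by
      intro F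
      rw [← Equiv.sum_comp (Fin.consEquiv κ) F, Fintype.sum_prod_type]
      rfl
    have hmass_cons : ∀ (x : κ 0) (r : ∀ i, κ' i),
        pmass w (Fin.cons x r) = w 0 x * pmass w' r := by
      intro x r
      unfold pmass
      rw [Fin.prod_univ_succ]
      simp [hw']
    -- (1) pexp factorization
    have hfact : ∀ F : (∀ i, κ i) → ℝ,
        pexp w F = pexp w' (fun r => ∑ x, w 0 x * F (Fin.cons x r)) := by
      intro F
      unfold pexp
      rw [hdecomp (fun ω => pmass w ω * F ω), Finset.sum_comm]
      congr 1
      funext r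
      rw [Finset.mul_sum]
      congr 1
      funext x
      rw [hmass_cons]
      ring
    have hEg : pexp w g = pexp w' gbar := hfact g
    -- (2) gbar bounded differences
    have hgbar_bd : ∀ (i : Fin N) (r : ∀ i, κ' i) (x x' : κ' i),
        gbar (Function.update r i x) - gbar (Function.update r i x') ≤ c' i := by
      intro i r x x'
      have : ∀ z : κ 0, Fin.cons z (Function.update r i x) =
          Function.update (Fin.cons z r) i.succ x := fun z => Fin.cons_update z r i x
      simp only [hgbar]
      rw [← Finset.sum_sub_distrib]
      calc ∑ z, (w 0 z * g (Fin.cons z (Function.update r i x)) -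
            w 0 z * g (Fin.cons z (Function.update r i x')))
          ≤ ∑ z, w 0 z * c' i := by
            apply Finset.sum_le_sum
            intro z _
            rw [← mul_sub]
            apply mul_le_mul_of_nonneg_left _ (hw0 0 z)
            rw [Fin.cons_update, Fin.cons_update]
            exact hg i.succ (Fin.cons z r) x x'
        _ = c' i := by rw [← Finset.sum_mul, hw1 0, one_mul]
    -- (3) per-r Hoeffding
    have hstep : ∀ r : ∀ i, κ' i,
        ∑ x, w 0 x * Real.exp (l * g (Fin.cons x r)) ≤
          Real.exp (l ^ 2 * c 0 ^ 2 / 8 + l * gbar r) := by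
      intro r
      have hosc : ∀ x y : κ 0, g (Fin.cons x r) - g (Fin.cons y r) ≤ c 0 := by
        intro x y
        have h := hg 0 (Fin.cons y r) x y
        rw [Fin.update_cons_zero, Fin.update_cons_zero] at h
        exact h
      exact hoeffding_core (w 0) (hw0 0) (hw1 0) (fun x => g (Fin.cons x r)) (c 0) l hosc
    -- assemble
    have hmain : pexp w (fun ω => Real.exp (l * (g ω - pexp w g))) ≤
        Real.exp (l ^ 2 * c 0 ^ 2 / 8) *
          pexp w' (fun r => Real.exp (l * (gbar r - pexp w' gbar))) := by
      rw [hfact (fun ω => Real.exp (l * (g ω - pexp w g)))]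
      rw [← pexp_smul w' (Real.exp (l ^ 2 * c 0 ^ 2 / 8))
        (fun r => Real.exp (l * (gbar r - pexp w' gbar)))]
      apply pexp_mono hw'0
      intro r
      have h1 : ∑ x, w 0 x * Real.exp (l * (g (Fin.cons x r) - pexp w g)) =
          Real.exp (-(l * pexp w g)) * ∑ x, w 0 x * Real.exp (l * g (Fin.cons x r)) := by
        rw [Finset.mul_sum]
        congr 1
        funext x
        rw [mul_sub, sub_eq_add_neg, Real.exp_add]
        ring
      rw [h1]
      have h2 := hstep r
      have h3 : Real.exp (-(l * pexp w g)) * ∑ x, w 0 x * Real.exp (l * g (Fin.cons x r)) ≤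
          Real.exp (-(l * pexp w g)) * Real.exp (l ^ 2 * c 0 ^ 2 / 8 + l * gbar r) :=
        mul_le_mul_of_nonneg_left h2 (Real.exp_pos _).le
      refine le_trans h3 (le_of_eq ?_)
      rw [← Real.exp_add, ← Real.exp_add]
      congr 1
      rw [hEg]
      ring
    refine le_trans hmain ?_
    have hih := ih κ' (inst := fun i => inst i.succ) w' hw'0 hw'1 gbar c' hgbar_bd l
    calc Real.exp (l ^ 2 * c 0 ^ 2 / 8) *
          pexp w' (fun r => Real.exp (l * (gbar r - pexp w' gbar)))
        ≤ Real.exp (l ^ 2 * c 0 ^ 2 / 8) * Real.exp (l ^ 2 * (∑ i, c' i ^ 2) / 8) :=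
          mul_le_mul_of_nonneg_left hih (Real.exp_pos _).le
      _ = Real.exp (l ^ 2 * (∑ i, c i ^ 2) / 8) := by
          rw [← Real.exp_add, Fin.sum_univ_succ (fun i => c i ^ 2)]
          congr 1
          simp only [hc']
          ring

/-- McDiarmid mgf bound over a general finite index type. -/
theorem mcdiarmid_mgf (w : ∀ i, κ i → ℝ) (hw0 : ∀ i x, 0 ≤ w i x)
    (hw1 : ∀ i, ∑ x, w i x = 1) (g : (∀ i, κ i) → ℝ) (c : I → ℝ)
    (hg : ∀ (i : I) (ω : ∀ i, κ i) (x x' : κ i),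
      g (Function.update ω i x) - g (Function.update ω i x') ≤ c i) (l : ℝ) :
    pexp w (fun ω => Real.exp (l * (g ω - pexp w g))) ≤
      Real.exp (l ^ 2 * (∑ i, c i ^ 2) / 8) := by
  classical
  set N := Fintype.card I with hN
  set e : I ≃ Fin N := Fintype.equivFin I with he
  set κ' : Fin N → Type u := fun j => κ (e.symm j) with hκ'
  letI : ∀ j, Fintype (κ' j) := fun j => inferInstanceAs (Fintype (κ (e.symm j)))
  set w' : ∀ j, κ' j → ℝ := fun j => w (e.symm j) with hw'
  set c' : Fin N → ℝ := fun j => c (e.symm j) with hc'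
  set E : (∀ i, κ i) ≃ (∀ j, κ' j) := Equiv.piCongrLeft' κ e with hE
  set g' : (∀ j, κ' j) → ℝ := fun ω' => g (E.symm ω') with hg'
  have hpe : ∀ F : (∀ i, κ i) → ℝ, pexp w' (fun ω' => F (E.symm ω')) = pexp w F := by
    intro F
    unfold pexp
    rw [← Equiv.sum_comp E (fun ω' => pmass w' ω' * F (E.symm ω'))]
    congr 1
    funext ω
    rw [Equiv.symm_apply_apply]
    congr 1
    unfold pmass
    rw [← Equiv.prod_comp e.symm (fun i => w i (ω i))]
    congr 1
  have hsum : ∑ j, c' j ^ 2 = ∑ i, c i ^ 2 := by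
    rw [← Equiv.sum_comp e.symm (fun i => c i ^ 2)]
  have hbd : ∀ (j : Fin N) (ω' : ∀ j, κ' j) (x x' : κ' j),
      g' (Function.update ω' j x) - g' (Function.update ω' j x') ≤ c' j := by
    intro j ω' x x'
    simp only [hg']
    rw [Function.piCongrLeft'_symm_update, Function.piCongrLeft'_symm_update]
    exact hg (e.symm j) (E.symm ω') x x'
  have := mcdiarmid_fin N κ' w'
    (fun j x => hw0 (e.symm j) x) (fun j => hw1 (e.symm j)) g' c' hbd l
  rw [hsum] at this
  have h1 : pexp w' g' = pexp w g := hpe g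
  rw [h1] at this
  rw [← hpe (fun ω => Real.exp (l * (g ω - pexp w g)))]
  exact this

/-- Chernoff-type tail bound from the mgf bound. -/
theorem mcdiarmid_tail (w : ∀ i, κ i → ℝ) (hw0 : ∀ i x, 0 ≤ w i x)
    (hw1 : ∀ i, ∑ x, w i x = 1) (g : (∀ i, κ i) → ℝ) (c : I → ℝ)
    (hg : ∀ (i : I) (ω : ∀ i, κ i) (x x' : κ i),
      g (Function.update ω i x) - g (Function.update ω i x') ≤ c i)
    (t : ℝ) (ht : 0 < t) (hV : 0 < ∑ i, c i ^ 2) :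
    ∑ ω, Set.indicator {ω | pexp w g + t ≤ g ω} (pmass w) ω ≤
      Real.exp (-2 * t ^ 2 / ∑ i, c i ^ 2) := by
  classical
  set V := ∑ i, c i ^ 2 with hVdef
  set l : ℝ := 4 * t / V with hl
  have hl0 : 0 < l := by positivity
  have hptwise : ∀ ω, Set.indicator {ω | pexp w g + t ≤ g ω} (pmass w) ω ≤
      pmass w ω * (Real.exp (l * (g ω - pexp w g)) * Real.exp (-(l * t))) := by
    intro ω
    by_cases hω : ω ∈ {ω | pexp w g + t ≤ g ω}
    · rw [Set.indicator_of_mem hω]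
      have h1 : (1 : ℝ) ≤ Real.exp (l * (g ω - pexp w g)) * Real.exp (-(l * t)) := by
        rw [← Real.exp_add, ← Real.exp_zero]
        apply Real.exp_le_exp.2
        have : pexp w g + t ≤ g ω := hω
        nlinarith
      nlinarith [pmass_nonneg hw0 ω, mul_le_mul_of_nonneg_left h1 (pmass_nonneg hw0 ω)]
    · rw [Set.indicator_of_notMem hω]
      exact mul_nonneg (pmass_nonneg hw0 ω) (by positivity)
  calc ∑ ω, Set.indicator {ω | pexp w g + t ≤ g ω} (pmass w) ω
      ≤ ∑ ω, pmass w ω * (Real.exp (l * (g ω - pexp w g)) * Real.exp (-(l * t))) :=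
        Finset.sum_le_sum fun ω _ => hptwise ω
    _ = Real.exp (-(l * t)) * pexp w (fun ω => Real.exp (l * (g ω - pexp w g))) := by
        unfold pexp
        rw [Finset.mul_sum]
        congr 1
        funext ω
        ring
    _ ≤ Real.exp (-(l * t)) * Real.exp (l ^ 2 * V / 8) :=
        mul_le_mul_of_nonneg_left (mcdiarmid_mgf w hw0 hw1 g c hg l) (Real.exp_pos _).le
    _ = Real.exp (-2 * t ^ 2 / V) := by
        rw [← Real.exp_add]
        congr 1
        rw [hl]
        field_simp
        ring

end ProductFramework
section Concrete

variable {d : ℕ} (m : Fin d → ℕ) (𝕊 : Finset (Finset (Fin d))) (n : Finset (Fin d) → ℕ)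

/-- Index of a single observation. -/
abbrev Idx (𝕊 : Finset (Finset (Fin d))) (n : Finset (Fin d) → ℕ) : Type :=
  (S : {T : Finset (Fin d) // T ∈ 𝕊}) × Fin (n S.1)

/-- Observation space of a single observation. -/
abbrev kap (m : Fin d → ℕ) (𝕊 : Finset (Finset (Fin d))) (n : Finset (Fin d) → ℕ)
    (σ : Idx 𝕊 n) : Type := Cell m σ.1.1

variable (p : ∀ S : Finset (Fin d), Cell m S → ℝ)

/-- Coordinate weights. -/
noncomputable def ww : ∀ σ : Idx 𝕊 n, kap m 𝕊 n σ → ℝ := fun σ => p σ.1.1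

/-- Currying equivalence with the sample space. -/
def uncur : (∀ σ : Idx 𝕊 n, kap m 𝕊 n σ) ≃ Samples m 𝕊 n :=
  Equiv.piCurry fun (S : {T : Finset (Fin d) // T ∈ 𝕊}) (_ : Fin (n S.1)) => Cell m S.1

lemma uncur_apply (ν : ∀ σ : Idx 𝕊 n, kap m 𝕊 n σ) (S : {T : Finset (Fin d) // T ∈ 𝕊})
    (i : Fin (n S.1)) : uncur m 𝕊 n ν S i = ν ⟨S, i⟩ := rfl

/-- Empirical frequency. -/
noncomputable def freq (S : {T : Finset (Fin d) // T ∈ 𝕊}) (ω : Samples m 𝕊 n)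
    (y : Cell m S.1) : ℝ :=
  (n S.1 : ℝ)⁻¹ * ∑ i, (if ω S i = y then (1 : ℝ) else 0)

/-- The test statistic: half the total ℓ¹ distance between empirical and true margins. -/
noncomputable def Tstat (ω : Samples m 𝕊 n) : ℝ :=
  2⁻¹ * ∑ S : {T : Finset (Fin d) // T ∈ 𝕊}, ∑ y, |freq m 𝕊 n S ω y - p S.1 y|

lemma jointMass_uncur (ν : ∀ σ : Idx 𝕊 n, kap m 𝕊 n σ) :
    jointMass m 𝕊 n p (uncur m 𝕊 n ν) = pmass (ww m 𝕊 n p) ν := by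
  unfold jointMass pmass
  rw [← Finset.univ_sigma_univ, Finset.prod_sigma]
  rfl

lemma Prob_eq (E : Set (Samples m 𝕊 n)) :
    Prob m 𝕊 n p E = ∑ ν, Set.indicator ((uncur m 𝕊 n) ⁻¹' E) (pmass (ww m 𝕊 n p)) ν := by
  unfold Prob
  rw [← Equiv.sum_comp (uncur m 𝕊 n) (Set.indicator E (jointMass m 𝕊 n p))]
  congr 1
  funext ν
  by_cases hν : uncur m 𝕊 n ν ∈ E
  · rw [Set.indicator_of_mem hν, Set.indicator_of_mem (Set.mem_preimage.2 hν),
      jointMass_uncur]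
  · have hν' : ν ∉ (uncur m 𝕊 n) ⁻¹' E := fun h => hν h
    rw [Set.indicator_of_notMem hν, Set.indicator_of_notMem hν']

lemma emp_eq_freq (ω : Samples m 𝕊 n) {S : Finset (Fin d)} (h : S ∈ 𝕊) (y : Cell m S) :
    emp m 𝕊 n p ω S y = freq m 𝕊 n ⟨S, h⟩ ω y := by
  unfold emp freq
  rw [dif_pos h]
  congr 1
  rw [Finset.card_filter]
  push_cast
  rfl

variable {m 𝕊 n p}

lemma ww_nonneg (hp : IsFamily m 𝕊 p) : ∀ (σ : Idx 𝕊 n) x, 0 ≤ ww m 𝕊 n p σ x :=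
  fun σ x => (hp σ.1.1 σ.1.2).1 x

lemma ww_sum_one (hp : IsFamily m 𝕊 p) : ∀ σ : Idx 𝕊 n, ∑ x, ww m 𝕊 n p σ x = 1 :=
  fun σ => (hp σ.1.1 σ.1.2).2

/-- The empirical marginal is a pmf. -/
lemma emp_isPMF (hn : ∀ S ∈ 𝕊, 0 < n S) (ω : Samples m 𝕊 n) {S : Finset (Fin d)}
    (h : S ∈ 𝕊) : IsPMF (emp m 𝕊 n p ω S) := by
  constructor
  · intro y
    rw [emp_eq_freq m 𝕊 n p ω h y]
    unfold freq
    apply mul_nonneg (by positivity)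
    apply Finset.sum_nonneg
    intro i _
    split <;> norm_num
  · rw [Finset.sum_congr rfl (fun y _ => emp_eq_freq m 𝕊 n p ω h y)]
    unfold freq
    rw [← Finset.mul_sum, Finset.sum_comm]
    have : ∀ i : Fin (n S), ∑ y : Cell m S, (if ω ⟨S, h⟩ i = y then (1 : ℝ) else 0) = 1 := by
      intro i
      rw [Finset.sum_ite_eq (Finset.univ : Finset (Cell m S)) (ω ⟨S, h⟩ i) (fun _ => (1 : ℝ))]
      simp
    rw [Finset.sum_congr rfl (fun i _ => this i), Finset.sum_const, Finset.card_univ]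
    have hn' : (0 : ℝ) < n S := by exact_mod_cast hn S h
    simp [Fintype.card_fin]
    field_simp

/-- Sum of indicator differences over values is at most 2. -/
lemma sum_ind_diff_le {γ : Type*} [Fintype γ] [DecidableEq γ] (x x' : γ) :
    ∑ y : γ, |(if x = y then (1 : ℝ) else 0) - (if x' = y then (1 : ℝ) else 0)| ≤ 2 := by
  have h1 : ∀ y : γ, |(if x = y then (1 : ℝ) else 0) - (if x' = y then (1 : ℝ) else 0)| ≤
      (if x = y then (1 : ℝ) else 0) + (if x' = y then (1 : ℝ) else 0) := by
    intro y
    have := abs_sub (if x = y then (1 : ℝ) else 0) (if x' = y then (1 : ℝ) else 0)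
    have e1 : |(if x = y then (1 : ℝ) else 0)| = (if x = y then (1 : ℝ) else 0) := by
      apply abs_of_nonneg; split <;> norm_num
    have e2 : |(if x' = y then (1 : ℝ) else 0)| = (if x' = y then (1 : ℝ) else 0) := by
      apply abs_of_nonneg; split <;> norm_num
    calc |(if x = y then (1 : ℝ) else 0) - (if x' = y then (1 : ℝ) else 0)|
        ≤ |(if x = y then (1 : ℝ) else 0)| + |(if x' = y then (1 : ℝ) else 0)| :=
          abs_sub _ _
      _ = (if x = y then (1 : ℝ) else 0) + (if x' = y then (1 : ℝ) else 0) := by rw [e1, e2]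
  calc ∑ y : γ, |(if x = y then (1 : ℝ) else 0) - (if x' = y then (1 : ℝ) else 0)|
      ≤ ∑ y : γ, ((if x = y then (1 : ℝ) else 0) + (if x' = y then (1 : ℝ) else 0)) :=
        Finset.sum_le_sum fun y _ => h1 y
    _ = 2 := by
        rw [Finset.sum_add_distrib, Finset.sum_ite_eq Finset.univ x (fun _ => (1:ℝ)),
          Finset.sum_ite_eq Finset.univ x' (fun _ => (1:ℝ))]
        norm_num

/-- Bounded differences for the test statistic. -/
lemma Tstat_bd (σ : Idx 𝕊 n) (ν : ∀ σ : Idx 𝕊 n, kap m 𝕊 n σ) (x x' : kap m 𝕊 n σ) :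
    Tstat m 𝕊 n p (uncur m 𝕊 n (Function.update ν σ x)) -
      Tstat m 𝕊 n p (uncur m 𝕊 n (Function.update ν σ x')) ≤ (n σ.1.1 : ℝ)⁻¹ := by
  classical
  obtain ⟨S₀, i₀⟩ := σ
  set ν₁ := Function.update ν ⟨S₀, i₀⟩ x with hν₁
  set ν₂ := Function.update ν ⟨S₀, i₀⟩ x' with hν₂
  -- frequencies agree off S₀
  have hoff : ∀ S : {T : Finset (Fin d) // T ∈ 𝕊}, S ≠ S₀ → ∀ y,
      freq m 𝕊 n S (uncur m 𝕊 n ν₁) y = freq m 𝕊 n S (uncur m 𝕊 n ν₂) y := by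
    intro S hS y
    unfold freq
    congr 1
    apply Finset.sum_congr rfl
    intro i _
    rw [uncur_apply, uncur_apply]
    have h1 : (⟨S, i⟩ : Idx 𝕊 n) ≠ ⟨S₀, i₀⟩ := by
      intro h; exact hS (congrArg Sigma.fst h)
    rw [hν₁, hν₂, Function.update_of_ne h1, Function.update_of_ne h1]
  -- difference concentrates on S₀
  have hdiff : Tstat m 𝕊 n p (uncur m 𝕊 n ν₁) - Tstat m 𝕊 n p (uncur m 𝕊 n ν₂) =
      2⁻¹ * (∑ y, |freq m 𝕊 n S₀ (uncur m 𝕊 n ν₁) y - p S₀.1 y| -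
        ∑ y, |freq m 𝕊 n S₀ (uncur m 𝕊 n ν₂) y - p S₀.1 y|) := by
    unfold Tstat
    rw [← mul_sub, ← Finset.sum_sub_distrib]
    congr 1
    rw [Fintype.sum_eq_single S₀]
    intro S hS
    rw [Finset.sum_congr rfl (fun y _ => by rw [hoff S hS y])]
    ring
  rw [hdiff]
  -- bound the S₀ difference
  have hfr : ∀ y, freq m 𝕊 n S₀ (uncur m 𝕊 n ν₁) y - freq m 𝕊 n S₀ (uncur m 𝕊 n ν₂) y =
      (n S₀.1 : ℝ)⁻¹ * ((if x = y then (1:ℝ) else 0) - (if x' = y then (1:ℝ) else 0)) := by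
    intro y
    unfold freq
    rw [← mul_sub]
    congr 1
    rw [← Finset.sum_sub_distrib]
    rw [Fintype.sum_eq_single i₀]
    · rw [uncur_apply, uncur_apply, hν₁, hν₂, Function.update_self, Function.update_self]
    · intro i hi
      have h1 : (⟨S₀, i⟩ : Idx 𝕊 n) ≠ ⟨S₀, i₀⟩ := by
        intro h
        apply hi
        have := (Sigma.mk.inj_iff.1 h).2
        exact eq_of_heq this
      rw [uncur_apply, uncur_apply, hν₁, hν₂, Function.update_of_ne h1,
        Function.update_of_ne h1]
      ring
  have hterm : ∑ y, |freq m 𝕊 n S₀ (uncur m 𝕊 n ν₁) y - p S₀.1 y| -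
      ∑ y, |freq m 𝕊 n S₀ (uncur m 𝕊 n ν₂) y - p S₀.1 y| ≤ 2 * (n S₀.1 : ℝ)⁻¹ := by
    rw [← Finset.sum_sub_distrib]
    calc ∑ y, (|freq m 𝕊 n S₀ (uncur m 𝕊 n ν₁) y - p S₀.1 y| -
          |freq m 𝕊 n S₀ (uncur m 𝕊 n ν₂) y - p S₀.1 y|)
        ≤ ∑ y, |freq m 𝕊 n S₀ (uncur m 𝕊 n ν₁) y - freq m 𝕊 n S₀ (uncur m 𝕊 n ν₂) y| := by
          apply Finset.sum_le_sum
          intro y _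
          have := abs_sub_abs_le_abs_sub (freq m 𝕊 n S₀ (uncur m 𝕊 n ν₁) y - p S₀.1 y)
            (freq m 𝕊 n S₀ (uncur m 𝕊 n ν₂) y - p S₀.1 y)
          simpa using this
      _ = (n S₀.1 : ℝ)⁻¹ *
            ∑ y, |(if x = y then (1:ℝ) else 0) - (if x' = y then (1:ℝ) else 0)| := by
          rw [Finset.mul_sum]
          apply Finset.sum_congr rfl
          intro y _
          rw [hfr y, abs_mul, abs_of_nonneg (by positivity : (0:ℝ) ≤ (n S₀.1 : ℝ)⁻¹)]
      _ ≤ (n S₀.1 : ℝ)⁻¹ * 2 := by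
          apply mul_le_mul_of_nonneg_left (sum_ind_diff_le x x') (by positivity)
      _ = 2 * (n S₀.1 : ℝ)⁻¹ := by ring
  calc 2⁻¹ * (∑ y, |freq m 𝕊 n S₀ (uncur m 𝕊 n ν₁) y - p S₀.1 y| -
        ∑ y, |freq m 𝕊 n S₀ (uncur m 𝕊 n ν₂) y - p S₀.1 y|)
      ≤ 2⁻¹ * (2 * (n S₀.1 : ℝ)⁻¹) := by
        apply mul_le_mul_of_nonneg_left hterm (by norm_num)
    _ = (n S₀.1 : ℝ)⁻¹ := by ring

end Concrete
section Expectation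

variable {d : ℕ} {m : Fin d → ℕ} {𝕊 : Finset (Finset (Fin d))} {n : Finset (Fin d) → ℕ}
  {p : ∀ S : Finset (Fin d), Cell m S → ℝ}

lemma ind_moment (hp : IsFamily m 𝕊 p) {S : Finset (Fin d)} (hS : S ∈ 𝕊) (y : Cell m S) :
    ∑ x, p S x * (if x = y then (1 : ℝ) else 0) = p S y := by
  classical
  simp only [mul_ite, mul_one, mul_zero]
  rw [Finset.sum_ite_eq' Finset.univ y (fun x => p S x)]
  simp

lemma f_moment1 (hp : IsFamily m 𝕊 p) {S : Finset (Fin d)} (hS : S ∈ 𝕊) (y : Cell m S) :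
    ∑ x, p S x * ((if x = y then (1 : ℝ) else 0) - p S y) = 0 := by
  classical
  simp only [mul_sub, Finset.sum_sub_distrib]
  rw [ind_moment hp hS y, ← Finset.sum_mul, (hp S hS).2, one_mul, sub_self]

lemma f_moment2 (hp : IsFamily m 𝕊 p) {S : Finset (Fin d)} (hS : S ∈ 𝕊) (y : Cell m S) :
    ∑ x, p S x * ((if x = y then (1 : ℝ) else 0) - p S y) ^ 2 = p S y - p S y ^ 2 := by
  classical
  have hexp : ∀ x : Cell m S, p S x * ((if x = y then (1 : ℝ) else 0) - p S y) ^ 2 =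
      p S x * (if x = y then (1 : ℝ) else 0) * (1 - 2 * p S y) + p S x * p S y ^ 2 := by
    intro x
    by_cases hx : x = y <;> simp [hx] <;> ring
  rw [Finset.sum_congr rfl (fun x _ => hexp x), Finset.sum_add_distrib, ← Finset.sum_mul,
    ← Finset.sum_mul, ind_moment hp hS y, (hp S hS).2, one_mul]
  ring

/-- Variance of the empirical frequency. -/
lemma freq_var (hp : IsFamily m 𝕊 p) (hn : ∀ S ∈ 𝕊, 0 < n S)
    (S : {T : Finset (Fin d) // T ∈ 𝕊}) (y : Cell m S.1) :
    pexp (ww m 𝕊 n p) (fun ν => (freq m 𝕊 n S (uncur m 𝕊 n ν) y - p S.1 y) ^ 2) =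
      (p S.1 y - p S.1 y ^ 2) / (n S.1 : ℝ) := by
  classical
  set q : ℝ := p S.1 y with hq
  set f : Cell m S.1 → ℝ := fun x => (if x = y then (1 : ℝ) else 0) - q with hf
  have hnn : (0 : ℝ) < (n S.1 : ℝ) := by exact_mod_cast hn S.1 S.2
  -- rewrite the centered frequency as an average of the centered indicators
  have hZ : ∀ ν : ∀ σ : Idx 𝕊 n, kap m 𝕊 n σ,
      freq m 𝕊 n S (uncur m 𝕊 n ν) y - q = (n S.1 : ℝ)⁻¹ * ∑ i, f (ν ⟨S, i⟩) := by
    intro ν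
    have e : ∑ i, f (ν ⟨S, i⟩) =
        (∑ i, if ν ⟨S, i⟩ = y then (1 : ℝ) else 0) - (n S.1 : ℝ) * q := by
      simp only [hf]
      rw [Finset.sum_sub_distrib, Finset.sum_const, Finset.card_univ, Fintype.card_fin,
        nsmul_eq_mul]
    show (n S.1 : ℝ)⁻¹ * (∑ i, if ν ⟨S, i⟩ = y then (1 : ℝ) else 0) - q = _
    rw [e, mul_sub, ← mul_assoc, inv_mul_cancel₀ (ne_of_gt hnn), one_mul]
  have hsq : ∀ ν : ∀ σ : Idx 𝕊 n, kap m 𝕊 n σ,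
      (freq m 𝕊 n S (uncur m 𝕊 n ν) y - q) ^ 2 =
        ((n S.1 : ℝ)⁻¹) ^ 2 * ∑ i, ∑ j, f (ν ⟨S, i⟩) * f (ν ⟨S, j⟩) := by
    intro ν
    rw [hZ ν, mul_pow]
    congr 1
    rw [pow_two, Finset.sum_mul_sum]
  rw [show (fun ν => (freq m 𝕊 n S (uncur m 𝕊 n ν) y - q) ^ 2) =
      fun ν => ((n S.1 : ℝ)⁻¹) ^ 2 * ∑ i, ∑ j, f (ν ⟨S, i⟩) * f (ν ⟨S, j⟩) from
    funext hsq]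
  rw [pexp_smul, pexp_sum]
  have hinner : ∀ i : Fin (n S.1),
      pexp (ww m 𝕊 n p) (fun ν => ∑ j, f (ν ⟨S, i⟩) * f (ν ⟨S, j⟩)) = q - q ^ 2 := by
    intro i
    rw [pexp_sum]
    rw [Fintype.sum_eq_single i]
    · have : (fun ν : ∀ σ : Idx 𝕊 n, kap m 𝕊 n σ => f (ν ⟨S, i⟩) * f (ν ⟨S, i⟩)) =
          fun ν => (fun x => f x * f x) (ν ⟨S, i⟩) := rfl
      rw [this, pexp_coord (ww_sum_one hp) ⟨S, i⟩ (fun x => f x * f x)]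
      have := f_moment2 hp S.2 y
      rw [← this]
      congr 1
      funext x
      rw [sq]
      rfl
    · intro j hj
      have hne : (⟨S, i⟩ : Idx 𝕊 n) ≠ ⟨S, j⟩ := by
        intro h
        exact hj (eq_of_heq (Sigma.mk.inj_iff.1 h).2).symm
      rw [pexp_coord_pair (ww_sum_one hp) hne f f]
      have h0 : ∑ x, ww m 𝕊 n p ⟨S, i⟩ x * f x = 0 := f_moment1 hp S.2 y
      have h0' : ∑ x, ww m 𝕊 n p ⟨S, j⟩ x * f x = 0 := f_moment1 hp S.2 y
      rw [h0, h0', mul_zero]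
  rw [Finset.sum_congr rfl (fun i _ => hinner i), Finset.sum_const, Finset.card_univ,
    Fintype.card_fin, nsmul_eq_mul]
  field_simp

/-- Per-cell mean absolute deviation bound. -/
lemma freq_absdev (hp : IsFamily m 𝕊 p) (hn : ∀ S ∈ 𝕊, 0 < n S)
    (S : {T : Finset (Fin d) // T ∈ 𝕊}) (y : Cell m S.1) :
    pexp (ww m 𝕊 n p) (fun ν => |freq m 𝕊 n S (uncur m 𝕊 n ν) y - p S.1 y|) ≤
      Real.sqrt ((p S.1 y - p S.1 y ^ 2) / (n S.1 : ℝ)) := by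
  have := pexp_abs_le_sqrt (ww_nonneg hp) (ww_sum_one hp)
    (fun ν => freq m 𝕊 n S (uncur m 𝕊 n ν) y - p S.1 y)
  rw [freq_var hp hn S y] at this
  exact this

/-- Cauchy–Schwarz: the total mean deviation of a pmf. -/
lemma sum_sqrt_var {γ : Type*} [Fintype γ] (q : γ → ℝ) (hq0 : ∀ x, 0 ≤ q x)
    (hq1 : ∑ x, q x = 1) (k : ℝ) (hk : 0 < k) :
    ∑ y, Real.sqrt ((q y - q y ^ 2) / k) ≤
      Real.sqrt (((Fintype.card γ : ℝ) - 1) / k) := by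
  classical
  have hne : Nonempty γ := by
    by_contra h
    rw [not_nonempty_iff] at h
    rw [Finset.sum_eq_zero (fun x _ => (h.false x).elim)] at hq1
    norm_num at hq1
  have hK1 : (1 : ℝ) ≤ (Fintype.card γ : ℝ) := by
    have := Fintype.card_pos_iff.2 hne
    exact_mod_cast this
  have hvar0 : ∀ y, 0 ≤ q y - q y ^ 2 := by
    intro y
    have hle1 : q y ≤ 1 := by
      rw [← hq1]
      exact Finset.single_le_sum (fun x _ => hq0 x) (Finset.mem_univ y)
    nlinarith [hq0 y]
  have hstep : ∀ y, Real.sqrt ((q y - q y ^ 2) / k) =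
      Real.sqrt (q y - q y ^ 2) / Real.sqrt k := fun y => Real.sqrt_div (hvar0 y) k
  rw [Finset.sum_congr rfl (fun y _ => hstep y), ← Finset.sum_div]
  rw [Real.sqrt_div (by linarith) k]
  gcongr
  -- remains: ∑ y, sqrt (q y - q y^2) ≤ sqrt (card - 1)
  have hs0 : 0 ≤ ∑ y, Real.sqrt (q y - q y ^ 2) :=
    Finset.sum_nonneg fun y _ => Real.sqrt_nonneg _
  rw [Real.le_sqrt hs0 (by linarith)]
  have hcs := Finset.sum_mul_sq_le_sq_mul_sq Finset.univ (fun _ : γ => (1 : ℝ))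
    (fun y => Real.sqrt (q y - q y ^ 2))
  simp only [one_mul, one_pow] at hcs
  have hsum : ∑ y, Real.sqrt (q y - q y ^ 2) ^ 2 = 1 - ∑ y, q y ^ 2 := by
    rw [Finset.sum_congr rfl (fun y _ => Real.sq_sqrt (hvar0 y)), Finset.sum_sub_distrib, hq1]
  have hcs2 := Finset.sum_mul_sq_le_sq_mul_sq Finset.univ (fun y : γ => q y)
    (fun _ : γ => (1 : ℝ))
  simp only [mul_one, one_pow, hq1] at hcs2
  have hKsum : ∑ (_ : γ), (1 : ℝ) = (Fintype.card γ : ℝ) := by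
    rw [Finset.sum_const, Finset.card_univ, nsmul_eq_mul, mul_one]
  rw [hKsum] at hcs
  rw [hsum] at hcs
  have h2 : (1 : ℝ) ≤ (∑ y, q y ^ 2) * (Fintype.card γ : ℝ) := by
    calc (1 : ℝ) ≤ (∑ y, q y ^ 2) * ∑ (_ : γ), (1 : ℝ) := hcs2
      _ = (∑ y, q y ^ 2) * (Fintype.card γ : ℝ) := by rw [hKsum]
  nlinarith

end Expectation
section Tail

variable {d : ℕ} {m : Fin d → ℕ} {𝕊 : Finset (Finset (Fin d))} {n : Finset (Fin d) → ℕ}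
  {p : ∀ S : Finset (Fin d), Cell m S → ℝ}

/-- Expectation bound for the test statistic. -/
lemma pexp_Tstat (hm : ∀ j, 0 < m j) (hp : IsFamily m 𝕊 p) (hn : ∀ S ∈ 𝕊, 0 < n S) :
    pexp (ww m 𝕊 n p) (fun ν => Tstat m 𝕊 n p (uncur m 𝕊 n ν)) ≤
      (1 / 2) * ∑ S ∈ 𝕊, Real.sqrt (((Fintype.card (Cell m S) : ℝ) - 1) / (n S : ℝ)) := by
  classical
  have h1 : (fun ν => Tstat m 𝕊 n p (uncur m 𝕊 n ν)) =
      fun ν => 2⁻¹ * ∑ S : {T : Finset (Fin d) // T ∈ 𝕊},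
        ∑ y, |freq m 𝕊 n S (uncur m 𝕊 n ν) y - p S.1 y| := rfl
  rw [h1, pexp_smul, pexp_sum]
  have h2 : ∀ S : {T : Finset (Fin d) // T ∈ 𝕊},
      pexp (ww m 𝕊 n p)
        (fun ν => ∑ y, |freq m 𝕊 n S (uncur m 𝕊 n ν) y - p S.1 y|) ≤
      Real.sqrt (((Fintype.card (Cell m S.1) : ℝ) - 1) / (n S.1 : ℝ)) := by
    intro S
    rw [pexp_sum]
    calc ∑ y, pexp (ww m 𝕊 n p) (fun ν => |freq m 𝕊 n S (uncur m 𝕊 n ν) y - p S.1 y|)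
        ≤ ∑ y, Real.sqrt ((p S.1 y - p S.1 y ^ 2) / (n S.1 : ℝ)) :=
          Finset.sum_le_sum fun y _ => freq_absdev hp hn S y
      _ ≤ Real.sqrt (((Fintype.card (Cell m S.1) : ℝ) - 1) / (n S.1 : ℝ)) := by
          apply sum_sqrt_var (p S.1) (hp S.1 S.2).1 (hp S.1 S.2).2
          exact_mod_cast hn S.1 S.2
  calc 2⁻¹ * ∑ S : {T : Finset (Fin d) // T ∈ 𝕊}, pexp (ww m 𝕊 n p)
        (fun ν => ∑ y, |freq m 𝕊 n S (uncur m 𝕊 n ν) y - p S.1 y|)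
      ≤ 2⁻¹ * ∑ S : {T : Finset (Fin d) // T ∈ 𝕊},
          Real.sqrt (((Fintype.card (Cell m S.1) : ℝ) - 1) / (n S.1 : ℝ)) := by
        apply mul_le_mul_of_nonneg_left _ (by norm_num)
        exact Finset.sum_le_sum fun S _ => h2 S
    _ = (1 / 2) * ∑ S ∈ 𝕊, Real.sqrt (((Fintype.card (Cell m S) : ℝ) - 1) / (n S : ℝ)) := by
        rw [Finset.sum_coe_sort 𝕊
          (fun S => Real.sqrt (((Fintype.card (Cell m S) : ℝ) - 1) / (n S : ℝ)))]
        norm_num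

/-- The key tail bound: the statistic exceeds `C_γ` with probability at most `γ`. -/
lemma tail_bound (hm : ∀ j, 0 < m j) (h𝕊 : 𝕊.Nonempty) (hp : IsFamily m 𝕊 p)
    (hn : ∀ S ∈ 𝕊, 0 < n S) (γ : ℝ) (hγ0 : 0 < γ) (hγ1 : γ < 1) :
    ∑ ν, Set.indicator
        {ν | Calpha m 𝕊 n γ ≤ Tstat m 𝕊 n p (uncur m 𝕊 n ν)} (pmass (ww m 𝕊 n p)) ν ≤ γ := by
  classical
  set N : ℝ := ∑ S ∈ 𝕊, 1 / (n S : ℝ) with hNdef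
  have hN : 0 < N := by
    obtain ⟨S₀, hS₀⟩ := h𝕊
    apply Finset.sum_pos'
    · intro S hS
      positivity
    · exact ⟨S₀, hS₀, by
        have := hn S₀ hS₀
        positivity⟩
  have hlog : 0 < Real.log (1 / γ) := by
    apply Real.log_pos
    rw [lt_div_iff₀ hγ0]
    linarith
  set t : ℝ := Real.sqrt ((1 / 2) * Real.log (1 / γ) * N) with htdef
  have ht : 0 < t := Real.sqrt_pos.2 (by positivity)
  set c : Idx 𝕊 n → ℝ := fun σ => (n σ.1.1 : ℝ)⁻¹ with hc
  have hV : ∑ σ, c σ ^ 2 = N := by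
    rw [← Finset.univ_sigma_univ, Finset.sum_sigma]
    rw [hNdef, ← Finset.sum_coe_sort 𝕊 (fun S => 1 / (n S : ℝ))]
    apply Finset.sum_congr rfl
    intro S _
    simp only [hc]
    rw [Finset.sum_const, Finset.card_univ, Fintype.card_fin, nsmul_eq_mul]
    have hnS : (0 : ℝ) < (n S.1 : ℝ) := by exact_mod_cast hn S.1 S.2
    field_simp
  have hVpos : 0 < ∑ σ, c σ ^ 2 := by rw [hV]; exact hN
  set g : (∀ σ : Idx 𝕊 n, kap m 𝕊 n σ) → ℝ := fun ν => Tstat m 𝕊 n p (uncur m 𝕊 n ν) with hg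
  have hbd : ∀ (σ : Idx 𝕊 n) (ν : ∀ σ : Idx 𝕊 n, kap m 𝕊 n σ) (x x' : kap m 𝕊 n σ),
      g (Function.update ν σ x) - g (Function.update ν σ x') ≤ c σ :=
    fun σ ν x x' => Tstat_bd σ ν x x'
  have htail := mcdiarmid_tail (ww m 𝕊 n p) (ww_nonneg hp) (ww_sum_one hp) g c hbd t ht hVpos
  -- event inclusion
  have hsub : {ν | Calpha m 𝕊 n γ ≤ Tstat m 𝕊 n p (uncur m 𝕊 n ν)} ⊆
      {ν | pexp (ww m 𝕊 n p) g + t ≤ g ν} := by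
    intro ν hν
    have h1 : Calpha m 𝕊 n γ ≤ g ν := hν
    have h2 : pexp (ww m 𝕊 n p) g + t ≤ Calpha m 𝕊 n γ := by
      unfold Calpha
      have := pexp_Tstat hm hp hn
      rw [← hg] at this
      rw [← hNdef, ← htdef]
      linarith
    exact le_trans h2 h1
  calc ∑ ν, Set.indicator
        {ν | Calpha m 𝕊 n γ ≤ Tstat m 𝕊 n p (uncur m 𝕊 n ν)} (pmass (ww m 𝕊 n p)) ν
      ≤ ∑ ν, Set.indicator {ν | pexp (ww m 𝕊 n p) g + t ≤ g ν} (pmass (ww m 𝕊 n p)) ν := by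
        apply Finset.sum_le_sum
        intro ν _
        exact Set.indicator_le_indicator_of_subset hsub
          (fun ν => pmass_nonneg (ww_nonneg hp) ν) ν
    _ ≤ Real.exp (-2 * t ^ 2 / ∑ σ, c σ ^ 2) := htail
    _ = γ := by
        rw [hV]
        have ht2 : t ^ 2 = (1 / 2) * Real.log (1 / γ) * N :=
          Real.sq_sqrt (by positivity)
        rw [ht2]
        have : -2 * ((1 / 2) * Real.log (1 / γ) * N) / N = -Real.log (1 / γ) := by
          field_simp
        rw [this, one_div, Real.log_inv, neg_neg, Real.exp_log hγ0]

end Tail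
section RixLemmas

variable {d : ℕ} {m : Fin d → ℕ} {𝕊 : Finset (Finset (Fin d))}

lemma GPlus_zero : GPlus m 𝕊 (fun _ _ => (0 : ℝ)) := by
  constructor
  · intro S _ y; norm_num
  · intro x; simp

lemma RL_zero (p : ∀ S : Finset (Fin d), Cell m S → ℝ) :
    RL m 𝕊 p (fun _ _ => (0 : ℝ)) = 0 := by
  unfold RL
  simp

/-- Truncation of a dual witness at level `|𝕊| - 1`. -/
noncomputable def trunc (𝕊 : Finset (Finset (Fin d)))
    (f : ∀ S : Finset (Fin d), Cell m S → ℝ) : ∀ S : Finset (Fin d), Cell m S → ℝ :=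
  fun S y => min (f S y) ((𝕊.card : ℝ) - 1)

lemma trunc_le (f : ∀ S : Finset (Fin d), Cell m S → ℝ) (S : Finset (Fin d)) (y : Cell m S) :
    trunc 𝕊 f S y ≤ f S y := min_le_left _ _

lemma card_pos_real (h𝕊 : 𝕊.Nonempty) : (1 : ℝ) ≤ (𝕊.card : ℝ) := by
  have := Finset.card_pos.2 h𝕊
  exact_mod_cast this

lemma GPlus_trunc (h𝕊 : 𝕊.Nonempty) {f : ∀ S : Finset (Fin d), Cell m S → ℝ}
    (hf : GPlus m 𝕊 f) : GPlus m 𝕊 (trunc 𝕊 f) := by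
  have hk1 : (1 : ℝ) ≤ (𝕊.card : ℝ) := card_pos_real h𝕊
  constructor
  · intro S hS y
    exact le_min (hf.1 S hS y) (by linarith)
  · intro x
    by_cases hcase : ∀ S ∈ 𝕊, f S (proj m S x) ≤ (𝕊.card : ℝ) - 1
    · have : ∀ S ∈ 𝕊, trunc 𝕊 f S (proj m S x) = f S (proj m S x) := fun S hS =>
        min_eq_left (hcase S hS)
      rw [Finset.sum_congr rfl this]
      exact hf.2 x
    · push_neg at hcase
      obtain ⟨S₀, hS₀, hbig⟩ := hcase
      rw [← Finset.add_sum_erase 𝕊 _ hS₀]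
      have h1 : trunc 𝕊 f S₀ (proj m S₀ x) = (𝕊.card : ℝ) - 1 := min_eq_right (le_of_lt hbig)
      have h2 : -(((𝕊.card : ℝ) - 1)) ≤ ∑ S ∈ 𝕊.erase S₀, trunc 𝕊 f S (proj m S x) := by
        have : ∑ S ∈ 𝕊.erase S₀, (-1 : ℝ) ≤ ∑ S ∈ 𝕊.erase S₀, trunc 𝕊 f S (proj m S x) := by
          apply Finset.sum_le_sum
          intro S hS
          exact le_min (hf.1 S (Finset.mem_of_mem_erase hS) (proj m S x)) (by linarith)
        rw [Finset.sum_const, Finset.card_erase_of_mem hS₀, nsmul_eq_mul] at this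
        have hc : ((𝕊.card - 1 : ℕ) : ℝ) = (𝕊.card : ℝ) - 1 := by
          have := Finset.card_pos.2 h𝕊
          push_cast [Nat.cast_sub (by omega : 1 ≤ 𝕊.card)]
          ring
        rw [hc] at this
        linarith
      rw [h1]
      linarith

lemma trunc_center {f : ∀ S : Finset (Fin d), Cell m S → ℝ} (hf : GPlus m 𝕊 f)
    (h𝕊 : 𝕊.Nonempty) : ∀ S ∈ 𝕊, ∀ y,
      |trunc 𝕊 f S y - ((𝕊.card : ℝ) - 2) / 2| ≤ (𝕊.card : ℝ) / 2 := by
  intro S hS y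
  have hk1 : (1 : ℝ) ≤ (𝕊.card : ℝ) := card_pos_real h𝕊
  have hlow : -1 ≤ trunc 𝕊 f S y := le_min (hf.1 S hS y) (by linarith)
  have hhigh : trunc 𝕊 f S y ≤ (𝕊.card : ℝ) - 1 := min_le_right _ _
  rw [abs_le]
  constructor <;> [linarith; linarith]

/-- Monotonicity of `RL` in the dual witness, for nonnegative marginals. -/
lemma RL_trunc_ge {q : ∀ S : Finset (Fin d), Cell m S → ℝ}
    (hq : ∀ S ∈ 𝕊, ∀ y, 0 ≤ q S y) (f : ∀ S : Finset (Fin d), Cell m S → ℝ) :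
    RL m 𝕊 q f ≤ RL m 𝕊 q (trunc 𝕊 f) := by
  unfold RL
  rw [neg_mul, neg_mul, neg_le_neg_iff]
  apply mul_le_mul_of_nonneg_left _ (by positivity)
  apply Finset.sum_le_sum
  intro S hS
  apply Finset.sum_le_sum
  intro y _
  exact mul_le_mul_of_nonneg_right (trunc_le f S y) (hq S hS y)

/-- Lipschitz property of `RL` for centered bounded witnesses. -/
lemma RL_lipschitz (h𝕊 : 𝕊.Nonempty) {P Q : ∀ S : Finset (Fin d), Cell m S → ℝ}
    (hP : ∀ S ∈ 𝕊, ∑ y, P S y = 1) (hQ : ∀ S ∈ 𝕊, ∑ y, Q S y = 1)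
    {f : ∀ S : Finset (Fin d), Cell m S → ℝ}
    (hf : ∀ S ∈ 𝕊, ∀ y, |f S y - ((𝕊.card : ℝ) - 2) / 2| ≤ (𝕊.card : ℝ) / 2) :
    RL m 𝕊 P f - RL m 𝕊 Q f ≤ 2⁻¹ * ∑ S ∈ 𝕊, ∑ y, |P S y - Q S y| := by
  have hk1 : (1 : ℝ) ≤ (𝕊.card : ℝ) := card_pos_real h𝕊
  set k : ℝ := (𝕊.card : ℝ) with hk
  set c₀ : ℝ := (k - 2) / 2 with hc₀
  have hdiff : RL m 𝕊 P f - RL m 𝕊 Q f =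
      (1 / k) * ∑ S ∈ 𝕊, ∑ y, (c₀ - f S y) * (P S y - Q S y) := by
    unfold RL
    have hterm : ∀ S ∈ 𝕊, ∑ y, (c₀ - f S y) * (P S y - Q S y) =
        (∑ y, f S y * Q S y) - ∑ y, f S y * P S y := by
      intro S hS
      have e0 : ∀ y : Cell m S, (c₀ - f S y) * (P S y - Q S y) =
          (c₀ * P S y - c₀ * Q S y) + (f S y * Q S y - f S y * P S y) := by
        intro y; ring
      rw [Finset.sum_congr rfl (fun y _ => e0 y), Finset.sum_add_distrib,
        Finset.sum_sub_distrib, Finset.sum_sub_distrib, ← Finset.mul_sum, ← Finset.mul_sum,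
        hP S hS, hQ S hS]
      ring
    rw [Finset.sum_congr rfl hterm, Finset.sum_sub_distrib]
    ring
  rw [hdiff]
  have hbound : ∑ S ∈ 𝕊, ∑ y, (c₀ - f S y) * (P S y - Q S y) ≤
      (k / 2) * ∑ S ∈ 𝕊, ∑ y, |P S y - Q S y| := by
    rw [Finset.mul_sum]
    apply Finset.sum_le_sum
    intro S hS
    rw [Finset.mul_sum]
    apply Finset.sum_le_sum
    intro y _
    calc (c₀ - f S y) * (P S y - Q S y) ≤ |(c₀ - f S y) * (P S y - Q S y)| := le_abs_self _
      _ = |c₀ - f S y| * |P S y - Q S y| := abs_mul _ _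
      _ ≤ (k / 2) * |P S y - Q S y| := by
          apply mul_le_mul_of_nonneg_right _ (abs_nonneg _)
          rw [abs_sub_comm]
          exact hf S hS y
  calc (1 / k) * ∑ S ∈ 𝕊, ∑ y, (c₀ - f S y) * (P S y - Q S y)
      ≤ (1 / k) * ((k / 2) * ∑ S ∈ 𝕊, ∑ y, |P S y - Q S y|) := by
        apply mul_le_mul_of_nonneg_left hbound (by positivity)
    _ = 2⁻¹ * ∑ S ∈ 𝕊, ∑ y, |P S y - Q S y| := by
        have hkne : k ≠ 0 := by linarith
        field_simp

/-- `RL` is at most 1 on families of pmfs. -/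
lemma RL_le_one (h𝕊 : 𝕊.Nonempty) {q : ∀ S : Finset (Fin d), Cell m S → ℝ}
    (hq : IsFamily m 𝕊 q) {f : ∀ S : Finset (Fin d), Cell m S → ℝ} (hf : GPlus m 𝕊 f) :
    RL m 𝕊 q f ≤ 1 := by
  have hk1 : (1 : ℝ) ≤ (𝕊.card : ℝ) := card_pos_real h𝕊
  have hkpos : (0 : ℝ) < (𝕊.card : ℝ) := by linarith
  unfold RL
  have hinner : ∀ S ∈ 𝕊, (-1 : ℝ) ≤ ∑ y, f S y * q S y := by
    intro S hS
    have h1 : ∑ y, (-1 : ℝ) * q S y ≤ ∑ y, f S y * q S y :=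
      Finset.sum_le_sum fun y _ => mul_le_mul_of_nonneg_right (hf.1 S hS y) ((hq S hS).1 y)
    have h2 : ∑ y, (-1 : ℝ) * q S y = -1 := by
      rw [← Finset.mul_sum, (hq S hS).2, mul_one]
    linarith
  have htot : -(𝕊.card : ℝ) ≤ ∑ S ∈ 𝕊, ∑ y, f S y * q S y := by
    have h3 := Finset.sum_le_sum hinner
    rw [Finset.sum_const, nsmul_eq_mul, mul_neg_one] at h3
    linarith
  calc -(1 / (𝕊.card : ℝ)) * ∑ S ∈ 𝕊, ∑ y, f S y * q S y
      ≤ -(1 / (𝕊.card : ℝ)) * (-(𝕊.card : ℝ)) := by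
        rw [neg_mul, neg_mul, neg_le_neg_iff]
        apply mul_le_mul_of_nonneg_left htot (by positivity)
    _ = 1 := by field_simp

/-- For a compatible family, `RL` is nonpositive on `𝒢⁺`. -/
lemma RL_compat_nonpos {p : ∀ S : Finset (Fin d), Cell m S → ℝ}
    (hcompat : Compatible m 𝕊 p) {f : ∀ S : Finset (Fin d), Cell m S → ℝ}
    (hf : GPlus m 𝕊 f) : RL m 𝕊 p f ≤ 0 := by
  classical
  obtain ⟨q, hqpmf, hmarg⟩ := hcompat
  have hS : ∀ S ∈ 𝕊, ∑ y, f S y * p S y = ∑ x : Full m, q x * f S (proj m S x) := by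
    intro S hS
    rw [Finset.sum_congr rfl (fun y _ => by rw [hmarg S hS y])]
    rw [Finset.sum_congr rfl (fun y (_ : y ∈ Finset.univ) => Finset.mul_sum Finset.univ
      (fun x => if proj m S x = y then q x else 0) (f S y))]
    rw [Finset.sum_comm]
    apply Finset.sum_congr rfl
    intro x _
    have : ∀ y : Cell m S, f S y * (if proj m S x = y then q x else 0) =
        if proj m S x = y then f S y * q x else 0 := by
      intro y; split <;> simp
    rw [Finset.sum_congr rfl (fun y _ => this y)]
    rw [Finset.sum_ite_eq Finset.univ (proj m S x) (fun y => f S y * q x)]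
    simp [mul_comm]
  have htot : 0 ≤ ∑ S ∈ 𝕊, ∑ y, f S y * p S y := by
    rw [Finset.sum_congr rfl hS, Finset.sum_comm]
    apply Finset.sum_nonneg
    intro x _
    rw [← Finset.mul_sum]
    exact mul_nonneg (hqpmf.1 x) (hf.2 x)
  unfold RL
  rw [neg_mul]
  simp only [neg_nonpos]
  positivity

/-- The dual set defining `Rix`. -/
lemma Rix_set_nonempty (p : ∀ S : Finset (Fin d), Cell m S → ℝ) :
    (0 : ℝ) ∈ {t | ∃ f, GPlus m 𝕊 f ∧ t = RL m 𝕊 p f} :=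
  ⟨fun _ _ => 0, GPlus_zero, (RL_zero p).symm⟩

lemma Rix_bddAbove (h𝕊 : 𝕊.Nonempty) {q : ∀ S : Finset (Fin d), Cell m S → ℝ}
    (hq : IsFamily m 𝕊 q) :
    BddAbove {t | ∃ f, GPlus m 𝕊 f ∧ t = RL m 𝕊 q f} := by
  refine ⟨1, ?_⟩
  rintro t ⟨f, hf, rfl⟩
  exact RL_le_one h𝕊 hq hf

lemma Rix_nonneg (h𝕊 : 𝕊.Nonempty) {q : ∀ S : Finset (Fin d), Cell m S → ℝ}
    (hq : IsFamily m 𝕊 q) : 0 ≤ Rix m 𝕊 q :=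
  le_csSup (Rix_bddAbove h𝕊 hq) (Rix_set_nonempty q)

/-- Key bound (i): for a compatible pmf family `p` and any pmf family `q`,
`Rix q` is at most half the total ℓ¹ distance. -/
lemma Rix_le_dist (h𝕊 : 𝕊.Nonempty) {p q : ∀ S : Finset (Fin d), Cell m S → ℝ}
    (hp : IsFamily m 𝕊 p) (hcompat : Compatible m 𝕊 p) (hq : IsFamily m 𝕊 q) :
    Rix m 𝕊 q ≤ 2⁻¹ * ∑ S ∈ 𝕊, ∑ y, |q S y - p S y| := by
  apply Real.sSup_le
  · rintro t ⟨f, hf, rfl⟩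
    have h1 : RL m 𝕊 q f ≤ RL m 𝕊 q (trunc 𝕊 f) :=
      RL_trunc_ge (fun S hS y => (hq S hS).1 y) f
    have h2 : RL m 𝕊 q (trunc 𝕊 f) - RL m 𝕊 p (trunc 𝕊 f) ≤
        2⁻¹ * ∑ S ∈ 𝕊, ∑ y, |q S y - p S y| :=
      RL_lipschitz h𝕊 (fun S hS => (hq S hS).2) (fun S hS => (hp S hS).2)
        (trunc_center hf h𝕊)
    have h3 : RL m 𝕊 p (trunc 𝕊 f) ≤ 0 := RL_compat_nonpos hcompat (GPlus_trunc h𝕊 hf)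
    linarith
  · positivity

/-- Key bound (ii): reverse Lipschitz bound for `Rix`. -/
lemma Rix_le_Rix_add_dist (h𝕊 : 𝕊.Nonempty) {p q : ∀ S : Finset (Fin d), Cell m S → ℝ}
    (hp : IsFamily m 𝕊 p) (hq : IsFamily m 𝕊 q) :
    Rix m 𝕊 p ≤ Rix m 𝕊 q + 2⁻¹ * ∑ S ∈ 𝕊, ∑ y, |p S y - q S y| := by
  apply Real.sSup_le
  · rintro t ⟨f, hf, rfl⟩
    have h1 : RL m 𝕊 p f ≤ RL m 𝕊 p (trunc 𝕊 f) :=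
      RL_trunc_ge (fun S hS y => (hp S hS).1 y) f
    have h2 : RL m 𝕊 p (trunc 𝕊 f) - RL m 𝕊 q (trunc 𝕊 f) ≤
        2⁻¹ * ∑ S ∈ 𝕊, ∑ y, |p S y - q S y| :=
      RL_lipschitz h𝕊 (fun S hS => (hp S hS).2) (fun S hS => (hq S hS).2)
        (trunc_center hf h𝕊)
    have h3 : RL m 𝕊 q (trunc 𝕊 f) ≤ Rix m 𝕊 q :=
      le_csSup (Rix_bddAbove h𝕊 hq) ⟨trunc 𝕊 f, GPlus_trunc h𝕊 hf, rfl⟩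
    linarith
  · have h4 : 0 ≤ Rix m 𝕊 q := Rix_nonneg h𝕊 hq
    have h5 : 0 ≤ 2⁻¹ * ∑ S ∈ 𝕊, ∑ y, |p S y - q S y| := by positivity
    linarith

end RixLemmas
section Assembly

variable {d : ℕ} {m : Fin d → ℕ} {𝕊 : Finset (Finset (Fin d))} {n : Finset (Fin d) → ℕ}
  {p : ∀ S : Finset (Fin d), Cell m S → ℝ}

lemma dist_emp (ω : Samples m 𝕊 n) :
    2⁻¹ * ∑ S ∈ 𝕊, ∑ y, |emp m 𝕊 n p ω S y - p S y| = Tstat m 𝕊 n p ω := by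
  unfold Tstat
  congr 1
  rw [← Finset.sum_coe_sort 𝕊 (fun S => ∑ y, |emp m 𝕊 n p ω S y - p S y|)]
  apply Finset.sum_congr rfl
  intro S _
  apply Finset.sum_congr rfl
  intro y _
  rw [emp_eq_freq m 𝕊 n p ω S.2 y]

lemma dist_emp' (ω : Samples m 𝕊 n) :
    2⁻¹ * ∑ S ∈ 𝕊, ∑ y, |p S y - emp m 𝕊 n p ω S y| = Tstat m 𝕊 n p ω := by
  rw [← dist_emp ω]
  congr 1
  apply Finset.sum_congr rfl
  intro S _
  apply Finset.sum_congr rfl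
  intro y _
  rw [abs_sub_comm]

lemma Prob_add_compl (hp : IsFamily m 𝕊 p) (E : Set (Samples m 𝕊 n)) :
    Prob m 𝕊 n p E + Prob m 𝕊 n p Eᶜ = 1 := by
  rw [Prob_eq m 𝕊 n p E, Prob_eq m 𝕊 n p Eᶜ, ← Finset.sum_add_distrib]
  have h1 : ∀ ν, Set.indicator ((uncur m 𝕊 n) ⁻¹' E) (pmass (ww m 𝕊 n p)) ν +
      Set.indicator ((uncur m 𝕊 n) ⁻¹' Eᶜ) (pmass (ww m 𝕊 n p)) ν =
        pmass (ww m 𝕊 n p) ν := by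
    intro ν
    have : (uncur m 𝕊 n) ⁻¹' Eᶜ = ((uncur m 𝕊 n) ⁻¹' E)ᶜ := rfl
    rw [this]
    exact Set.indicator_self_add_compl_apply _ _ _
  rw [Finset.sum_congr rfl (fun ν _ => h1 ν)]
  exact sum_pmass (ww_sum_one hp)

end Assembly

/-- Proposition: size and power of the universal test. -/
theorem statement_2 {d : ℕ} (m : Fin d → ℕ) (hm : ∀ j, 0 < m j)
    (𝕊 : Finset (Finset (Fin d))) (h𝕊 : 𝕊.Nonempty) (hSne : ∀ S ∈ 𝕊, S.Nonempty)
    (n : Finset (Fin d) → ℕ) (hn : ∀ S ∈ 𝕊, 0 < n S)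
    (p : ∀ S : Finset (Fin d), Cell m S → ℝ) (hp : IsFamily m 𝕊 p)
    (α β : ℝ) (hα : α ∈ Set.Ioo (0 : ℝ) 1) (hβ : β ∈ Set.Ioo (0 : ℝ) 1) :
    (Compatible m 𝕊 p →
      Prob m 𝕊 n p {ω | Calpha m 𝕊 n α ≤ Rix m 𝕊 (emp m 𝕊 n p ω)} ≤ α) ∧
    (Calpha m 𝕊 n α + Calpha m 𝕊 n β ≤ Rix m 𝕊 p →
      1 - β ≤ Prob m 𝕊 n p {ω | Calpha m 𝕊 n α ≤ Rix m 𝕊 (emp m 𝕊 n p ω)}) := by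
  have hempfam : ∀ ω : Samples m 𝕊 n, IsFamily m 𝕊 (emp m 𝕊 n p ω) := by
    intro ω S hS
    exact emp_isPMF hn ω hS
  constructor
  · -- size of the test
    intro hcompat
    rw [Prob_eq m 𝕊 n p]
    have hsub : (uncur m 𝕊 n) ⁻¹' {ω | Calpha m 𝕊 n α ≤ Rix m 𝕊 (emp m 𝕊 n p ω)} ⊆
        {ν | Calpha m 𝕊 n α ≤ Tstat m 𝕊 n p (uncur m 𝕊 n ν)} := by
      intro ν hν
      have h1 : Calpha m 𝕊 n α ≤ Rix m 𝕊 (emp m 𝕊 n p (uncur m 𝕊 n ν)) := hν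
      have h2 : Rix m 𝕊 (emp m 𝕊 n p (uncur m 𝕊 n ν)) ≤
          2⁻¹ * ∑ S ∈ 𝕊, ∑ y, |emp m 𝕊 n p (uncur m 𝕊 n ν) S y - p S y| :=
        Rix_le_dist h𝕊 hp hcompat (hempfam (uncur m 𝕊 n ν))
      rw [dist_emp (uncur m 𝕊 n ν)] at h2
      exact le_trans h1 h2
    calc ∑ ν, Set.indicator
          ((uncur m 𝕊 n) ⁻¹' {ω | Calpha m 𝕊 n α ≤ Rix m 𝕊 (emp m 𝕊 n p ω)})
          (pmass (ww m 𝕊 n p)) ν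
        ≤ ∑ ν, Set.indicator
            {ν | Calpha m 𝕊 n α ≤ Tstat m 𝕊 n p (uncur m 𝕊 n ν)} (pmass (ww m 𝕊 n p)) ν :=
          Finset.sum_le_sum fun ν _ => Set.indicator_le_indicator_of_subset hsub
            (fun ν => pmass_nonneg (ww_nonneg hp) ν) ν
      _ ≤ α := tail_bound hm h𝕊 hp hn α hα.1 hα.2
  · -- power of the test
    intro hpow
    set E : Set (Samples m 𝕊 n) := {ω | Calpha m 𝕊 n α ≤ Rix m 𝕊 (emp m 𝕊 n p ω)} with hE
    have hcompl : Prob m 𝕊 n p Eᶜ ≤ β := by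
      rw [Prob_eq m 𝕊 n p]
      have hsub : (uncur m 𝕊 n) ⁻¹' Eᶜ ⊆
          {ν | Calpha m 𝕊 n β ≤ Tstat m 𝕊 n p (uncur m 𝕊 n ν)} := by
        intro ν hν
        have h1 : ¬ Calpha m 𝕊 n α ≤ Rix m 𝕊 (emp m 𝕊 n p (uncur m 𝕊 n ν)) := hν
        push_neg at h1
        have h2 : Rix m 𝕊 p ≤ Rix m 𝕊 (emp m 𝕊 n p (uncur m 𝕊 n ν)) +
            2⁻¹ * ∑ S ∈ 𝕊, ∑ y, |p S y - emp m 𝕊 n p (uncur m 𝕊 n ν) S y| :=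
          Rix_le_Rix_add_dist h𝕊 hp (hempfam (uncur m 𝕊 n ν))
        rw [dist_emp' (uncur m 𝕊 n ν)] at h2
        have h3 : Calpha m 𝕊 n α + Calpha m 𝕊 n β ≤
            Rix m 𝕊 (emp m 𝕊 n p (uncur m 𝕊 n ν)) + Tstat m 𝕊 n p (uncur m 𝕊 n ν) :=
          le_trans hpow h2
        have : Calpha m 𝕊 n β ≤ Tstat m 𝕊 n p (uncur m 𝕊 n ν) := by linarith
        exact this
      calc ∑ ν, Set.indicator ((uncur m 𝕊 n) ⁻¹' Eᶜ) (pmass (ww m 𝕊 n p)) ν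
          ≤ ∑ ν, Set.indicator
              {ν | Calpha m 𝕊 n β ≤ Tstat m 𝕊 n p (uncur m 𝕊 n ν)} (pmass (ww m 𝕊 n p)) ν :=
            Finset.sum_le_sum fun ν _ => Set.indicator_le_indicator_of_subset hsub
              (fun ν => pmass_nonneg (ww_nonneg hp) ν) ν
        _ ≤ β := tail_bound hm h𝕊 hp hn β hβ.1 hβ.2
    have hadd := Prob_add_compl hp E
    linarith
end

section
/- Identify each family P_𝕊 ∈ 𝒫_𝕊 with the vector of its mass functions in ℝ^{X_𝕊}, where X_𝕊 = {(S, x_S) : S ∈ 𝕊, x_S ∈ X_S}. Then 𝒫_𝕊^0 is a full-dimensional subset of 𝒫_𝕊^cons: for every f ∈ ℝ^{X_𝕊} and c ∈ ℝ, if ∑_{(S,x_S)} f_{(S,x_S)} p_S(x_S) = c for all P_𝕊 ∈ 𝒫_𝕊^0, then ∑_{(S,x_S)} f_{(S,x_S)} p_S(x_S) = c for all P_𝕊 ∈ 𝒫_𝕊^cons; equivalently, the affine spans of 𝒫_𝕊^0 and of 𝒫_𝕊^cons in ℝ^{X_𝕊} coincide. -/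
open Finset

namespace St3

variable {d : ℕ} (m : Fin d → ℕ)

noncomputable def N (A : Finset (Fin d)) : ℝ := ∏ j ∈ A, (m j : ℝ)

lemma N_pos (hm : ∀ j, 0 < m j) (A : Finset (Fin d)) : 0 < N m A :=
  Finset.prod_pos fun j _ => by exact_mod_cast hm j

lemma N_ne (hm : ∀ j, 0 < m j) (A : Finset (Fin d)) : N m A ≠ 0 := (N_pos m hm A).ne'

lemma N_mul_compl (A : Finset (Fin d)) : N m A * N m Aᶜ = N m univ := by
  simpa [N] using Finset.prod_mul_prod_compl A (fun j => (m j : ℝ))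

lemma N_compl_pair (A B : Finset (Fin d)) :
    N m (A ∪ B)ᶜ * N m (A ∩ B)ᶜ = N m Aᶜ * N m Bᶜ := by
  rw [Finset.compl_union, Finset.compl_inter]
  rw [mul_comm]
  exact Finset.prod_union_inter

lemma card_cell (S : Finset (Fin d)) : ((Fintype.card (Cell m S) : ℝ)) = N m S := by
  rw [Fintype.card_pi]
  push_cast
  simp only [Fintype.card_fin]
  rw [N, ← Finset.prod_subtype S (fun x => Iff.rfl) (fun j => (m j : ℝ))]

lemma card_full : ((Fintype.card (Full m) : ℝ)) = N m univ := by
  rw [Fintype.card_pi]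
  push_cast
  simp [N, Fintype.card_fin]

lemma projSub_proj {S V : Finset (Fin d)} (h : V ⊆ S) (x : Full m) :
    projSub m h (proj m S x) = proj m V x := rfl

lemma proj_mono {V' V : Finset (Fin d)} (h : V' ⊆ V) {x y : Full m}
    (hxy : proj m V x = proj m V y) : proj m V' x = proj m V' y :=
  funext fun j => congrFun hxy ⟨j.1, h j.2⟩

lemma proj_empty (x y : Full m) : proj m ∅ x = proj m ∅ y :=
  funext fun j => absurd j.2 (Finset.notMem_empty _)

lemma sum_proj (S : Finset (Fin d)) (F : Cell m S → ℝ) :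
    ∑ x : Full m, F (proj m S x) = N m Sᶜ * ∑ t : Cell m S, F t := by
  classical
  rw [← Equiv.sum_comp (Equiv.piEquivPiSubtypeProd (fun j : Fin d => j ∈ S)
    (fun j => Fin (m j))).symm (fun x : Full m => F (proj m S x))]
  have hproj : ∀ ab : ((i : { x // x ∈ S }) → Fin (m i.1)) × ((i : { x // x ∉ S }) → Fin (m i.1)),
      proj m S ((Equiv.piEquivPiSubtypeProd (fun j : Fin d => j ∈ S)
        (fun j => Fin (m j))).symm ab) = ab.1 := by
    intro ab
    funext j
    show _ = ab.1 j
    simp [Equiv.piEquivPiSubtypeProd, proj, j.2]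
  simp only [hproj]
  rw [Fintype.sum_prod_type]
  have hcard : ((Fintype.card ((i : { x : Fin d // x ∉ S }) → Fin (m i.1)) : ℝ)) = N m Sᶜ := by
    rw [Fintype.card_pi]
    push_cast
    simp only [Fintype.card_fin]
    rw [N, ← Finset.prod_subtype Sᶜ (fun x => by simp) (fun j => (m j : ℝ))]
  simp only [Finset.sum_const, nsmul_eq_mul]
  rw [← Finset.mul_sum, Finset.card_univ, hcard]

lemma cnt (V : Finset (Fin d)) (t : Cell m V) :
    ∑ x : Full m, (if proj m V x = t then (1 : ℝ) else 0) = N m Vᶜ := by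
  classical
  rw [sum_proj m V (fun z => if z = t then (1 : ℝ) else 0)]
  simp

noncomputable def Mar (V : Finset (Fin d)) (F : Full m → ℝ) (x : Full m) : ℝ :=
  ∑ x' : Full m, if proj m V x' = proj m V x then F x' else 0

lemma mar_proj (V : Finset (Fin d)) (F : Cell m V → ℝ) (x : Full m) :
    Mar m V (fun y => F (proj m V y)) x = N m Vᶜ * F (proj m V x) := by
  classical
  unfold Mar
  calc ∑ x' : Full m, (if proj m V x' = proj m V x then F (proj m V x') else 0)
      = ∑ x' : Full m, (if proj m V x' = proj m V x then (1:ℝ) else 0) * F (proj m V x) := by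
        refine Finset.sum_congr rfl fun x' _ => ?_
        split
        · next h => rw [h]; ring
        · ring
    _ = N m Vᶜ * F (proj m V x) := by rw [← Finset.sum_mul, cnt]

lemma Mar_mul (V : Finset (Fin d)) (a : ℝ) (F : Full m → ℝ) (x : Full m) :
    Mar m V (fun y => a * F y) x = a * Mar m V F x := by
  classical
  unfold Mar
  rw [Finset.mul_sum]
  exact Finset.sum_congr rfl fun x' _ => by split <;> ring

lemma sum_Mar (V : Finset (Fin d)) (F : Full m → ℝ) :
    ∑ x : Full m, Mar m V F x = N m Vᶜ * ∑ x : Full m, F x := by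
  classical
  unfold Mar
  rw [Finset.sum_comm, Finset.mul_sum]
  refine Finset.sum_congr rfl fun x' _ => ?_
  calc ∑ x : Full m, (if proj m V x' = proj m V x then F x' else 0)
      = ∑ x : Full m, (if proj m V x = proj m V x' then (1:ℝ) else 0) * F x' := by
        refine Finset.sum_congr rfl fun x _ => ?_
        simp only [eq_comm, mul_ite, mul_zero, mul_one, one_mul, ite_mul, zero_mul]
    _ = N m Vᶜ * F x' := by rw [← Finset.sum_mul, cnt]

lemma int_out (T : Finset (Fin d)) (K G : Full m → ℝ)
    (hG : ∀ x y, proj m T x = proj m T y → G x = G y) :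
    ∑ x : Full m, Mar m T K x * G x = N m Tᶜ * ∑ x : Full m, K x * G x := by
  classical
  unfold Mar
  simp only [Finset.sum_mul]
  rw [Finset.sum_comm, Finset.mul_sum]
  refine Finset.sum_congr rfl fun x' _ => ?_
  calc ∑ x : Full m, (if proj m T x' = proj m T x then K x' else 0) * G x
      = ∑ x : Full m, (if proj m T x = proj m T x' then (1:ℝ) else 0) * (K x' * G x') := by
        refine Finset.sum_congr rfl fun x _ => ?_
        by_cases h : proj m T x' = proj m T x
        · rw [if_pos h, if_pos h.symm, hG x x' h.symm]; ring
        · rw [if_neg h, if_neg (fun hh => h hh.symm)]; ring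
    _ = N m Tᶜ * (K x' * G x') := by rw [← Finset.sum_mul, cnt]

lemma count_pair (A B : Finset (Fin d)) (x x' : Full m) :
    ∑ x'' : Full m, (if proj m A x'' = proj m A x ∧ proj m B x'' = proj m B x'
      then (1 : ℝ) else 0)
    = if proj m (A ∩ B) x' = proj m (A ∩ B) x then N m (A ∪ B)ᶜ else 0 := by
  classical
  by_cases hc : proj m (A ∩ B) x' = proj m (A ∩ B) x
  · rw [if_pos hc]
    set s : Full m := fun j => if j ∈ A then x j else x' j with hs
    have hiff : ∀ x'' : Full m,
        (proj m A x'' = proj m A x ∧ proj m B x'' = proj m B x') ↔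
          proj m (A ∪ B) x'' = proj m (A ∪ B) s := by
      intro x''
      constructor
      · rintro ⟨h1, h2⟩
        funext j
        rcases Finset.mem_union.1 j.2 with hA | hB
        · have := congrFun h1 ⟨j.1, hA⟩
          show x'' j.1 = s j.1
          rw [hs]; simp only [if_pos hA]
          exact this
        · show x'' j.1 = s j.1
          rw [hs]
          by_cases hA : j.1 ∈ A
          · simp only [if_pos hA]
            have h2' := congrFun h2 ⟨j.1, hB⟩
            have hcj := congrFun hc ⟨j.1, Finset.mem_inter.2 ⟨hA, hB⟩⟩
            exact (h2' : x'' j.1 = x' j.1).trans (hcj : x' j.1 = x j.1)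
          · simp only [if_neg hA]
            exact congrFun h2 ⟨j.1, hB⟩
      · intro h
        constructor
        · funext j
          have hxs : x'' j.1 = s j.1 := congrFun h ⟨j.1, Finset.mem_union_left _ j.2⟩
          show x'' j.1 = x j.1
          rw [hxs, hs]
          simp [j.2]
        · funext j
          have hxs : x'' j.1 = s j.1 := congrFun h ⟨j.1, Finset.mem_union_right _ j.2⟩
          show x'' j.1 = x' j.1
          rw [hxs, hs]
          by_cases hA : j.1 ∈ A
          · simp only [if_pos hA]
            exact (congrFun hc ⟨j.1, Finset.mem_inter.2 ⟨hA, j.2⟩⟩ : x' j.1 = x j.1).symm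
          · simp [hA]
    calc ∑ x'' : Full m, (if proj m A x'' = proj m A x ∧ proj m B x'' = proj m B x'
          then (1 : ℝ) else 0)
        = ∑ x'' : Full m, (if proj m (A ∪ B) x'' = proj m (A ∪ B) s then (1 : ℝ) else 0) := by
          refine Finset.sum_congr rfl fun x'' _ => ?_
          exact if_congr (hiff x'') rfl rfl
      _ = N m (A ∪ B)ᶜ := cnt m (A ∪ B) (proj m (A ∪ B) s)
  · rw [if_neg hc]
    refine Finset.sum_eq_zero fun x'' _ => ?_
    rw [if_neg]
    rintro ⟨h1, h2⟩
    exact hc ((proj_mono m Finset.inter_subset_right h2).symm.trans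
      (proj_mono m Finset.inter_subset_left h1))

lemma comp (A B : Finset (Fin d)) (F : Full m → ℝ) (x : Full m) :
    Mar m A (Mar m B F) x = N m (A ∪ B)ᶜ * Mar m (A ∩ B) F x := by
  classical
  unfold Mar
  calc ∑ x'' : Full m, (if proj m A x'' = proj m A x then
          (∑ x' : Full m, if proj m B x' = proj m B x'' then F x' else 0) else 0)
      = ∑ x'' : Full m, ∑ x' : Full m,
          (if proj m A x'' = proj m A x ∧ proj m B x'' = proj m B x' then F x' else 0) := by
        refine Finset.sum_congr rfl fun x'' _ => ?_
        by_cases h : proj m A x'' = proj m A x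
        · rw [if_pos h]
          refine Finset.sum_congr rfl fun x' _ => ?_
          by_cases h2 : proj m B x' = proj m B x''
          · rw [if_pos h2, if_pos ⟨h, h2.symm⟩]
          · rw [if_neg h2, if_neg (fun hh => h2 hh.2.symm)]
        · rw [if_neg h]
          exact (Finset.sum_eq_zero fun x' _ => if_neg (fun hh => h hh.1)).symm
    _ = ∑ x' : Full m, ∑ x'' : Full m,
          (if proj m A x'' = proj m A x ∧ proj m B x'' = proj m B x' then F x' else 0) :=
        Finset.sum_comm
    _ = ∑ x' : Full m,
          (if proj m (A ∩ B) x' = proj m (A ∩ B) x then N m (A ∪ B)ᶜ else 0) * F x' := by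
        refine Finset.sum_congr rfl fun x' _ => ?_
        rw [← count_pair m A B x x', Finset.sum_mul]
        exact Finset.sum_congr rfl fun x'' _ => by split <;> ring
    _ = N m (A ∪ B)ᶜ * ∑ x' : Full m,
          (if proj m (A ∩ B) x' = proj m (A ∩ B) x then F x' else 0) := by
        rw [Finset.mul_sum]
        exact Finset.sum_congr rfl fun x' _ => by split <;> ring


lemma mar_marg {S V : Finset (Fin d)} (hVS : V ⊆ S) (pS : Cell m S → ℝ) (x : Full m) :
    Mar m V (fun y => pS (proj m S y)) x = N m Sᶜ * marg m V hVS pS (proj m V x) := by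
  classical
  unfold Mar marg
  calc ∑ x' : Full m, (if proj m V x' = proj m V x then pS (proj m S x') else 0)
      = ∑ x' : Full m, (if projSub m hVS (proj m S x') = proj m V x
          then pS (proj m S x') else 0) := rfl
    _ = N m Sᶜ * ∑ z : Cell m S, (if projSub m hVS z = proj m V x then pS z else 0) :=
        sum_proj m S (fun z => if projSub m hVS z = proj m V x then pS z else 0)

lemma mar_empty (F : Full m → ℝ) (x : Full m) :
    Mar m ∅ F x = ∑ x' : Full m, F x' := by
  unfold Mar
  exact Finset.sum_congr rfl fun x' _ => if_pos (proj_empty m x' x)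

lemma sum_lift {S : Finset (Fin d)} (pS : Cell m S → ℝ) (hp : ∑ z, pS z = 1) :
    ∑ x : Full m, pS (proj m S x) = N m Sᶜ := by
  rw [sum_proj m S pS, hp, mul_one]

lemma gcons (hm : ∀ j, 0 < m j) {𝕊 : Finset (Finset (Fin d))}
    {p : ∀ S : Finset (Fin d), Cell m S → ℝ}
    (hf : IsFamily m 𝕊 p) (hc : Consistent m 𝕊 p)
    {S T : Finset (Fin d)} (hS : S ∈ 𝕊) (hT : T ∈ 𝕊)
    {V : Finset (Fin d)} (hVS : V ⊆ S) (hVT : V ⊆ T) (x : Full m) :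
    N m Tᶜ * Mar m V (fun y => p S (proj m S y)) x
      = N m Sᶜ * Mar m V (fun y => p T (proj m T y)) x := by
  classical
  rcases V.eq_empty_or_nonempty with hV | hV
  · subst hV
    rw [mar_empty, mar_empty, sum_lift m (p S) (hf S hS).2, sum_lift m (p T) (hf T hT).2]
    ring
  · have hST : (S ∩ T).Nonempty := hV.mono (Finset.subset_inter hVS hVT)
    have hmarg := hc S hS T hT hST
    have hb : (fun y => N m Tᶜ * Mar m (S ∩ T) (fun y' => p S (proj m S y')) y)
        = (fun y => N m Sᶜ * Mar m (S ∩ T) (fun y' => p T (proj m T y')) y) := by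
      funext y
      rw [mar_marg m Finset.inter_subset_left (p S) y,
        mar_marg m Finset.inter_subset_right (p T) y, hmarg]
      ring
    have hV' : V ⊆ S ∩ T := Finset.subset_inter hVS hVT
    have hcompS := comp m V (S ∩ T) (fun y => p S (proj m S y)) x
    have hcompT := comp m V (S ∩ T) (fun y => p T (proj m T y)) x
    rw [Finset.union_eq_right.2 hV', Finset.inter_eq_left.2 hV'] at hcompS hcompT
    have hkey : N m Tᶜ * Mar m V (Mar m (S ∩ T) (fun y => p S (proj m S y))) x
        = N m Sᶜ * Mar m V (Mar m (S ∩ T) (fun y => p T (proj m T y))) x := by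
      rw [← Mar_mul m V (N m Tᶜ) _ x, ← Mar_mul m V (N m Sᶜ) _ x]
      exact congrFun (congrArg (fun (F : Full m → ℝ) => Mar m V F) hb) x
    rw [hcompS, hcompT] at hkey
    have hne : N m (S ∩ T)ᶜ ≠ 0 := N_ne m hm _
    apply mul_left_cancel₀ hne
    linear_combination hkey

noncomputable def Dq (p f : ∀ S : Finset (Fin d), Cell m S → ℝ) (T V : Finset (Fin d)) : ℝ :=
  (N m Vᶜ)⁻¹ * (N m Tᶜ)⁻¹
      * ∑ x : Full m, Mar m V (fun y => p T (proj m T y)) x * f T (proj m T x)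
    - (N m univ)⁻¹ * ∑ x : Full m, f T (proj m T x)

lemma Dq_diag (hm : ∀ j, 0 < m j) (p f : ∀ S : Finset (Fin d), Cell m S → ℝ)
    (T : Finset (Fin d)) :
    Dq m p f T T = (∑ y, f T y * p T y) - (N m univ)⁻¹ * (N m Tᶜ * ∑ y, f T y) := by
  unfold Dq
  have h1 : ∀ x : Full m, Mar m T (fun y => p T (proj m T y)) x * f T (proj m T x)
      = N m Tᶜ * (p T (proj m T x) * f T (proj m T x)) := by
    intro x
    rw [mar_proj m T (p T) x]
    ring
  simp only [h1]
  rw [← Finset.mul_sum, sum_proj m T (fun t => p T t * f T t), sum_proj m T (fun t => f T t)]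
  have hTne : N m Tᶜ ≠ 0 := N_ne m hm _
  have hfe : ∑ t : Cell m T, p T t * f T t = ∑ y, f T y * p T y :=
    Finset.sum_congr rfl fun y _ => mul_comm _ _
  rw [sub_left_inj, hfe]
  field_simp

lemma Dq_key (hm : ∀ j, 0 < m j) {𝕊 : Finset (Finset (Fin d))}
    {p : ∀ S : Finset (Fin d), Cell m S → ℝ} (f : ∀ S : Finset (Fin d), Cell m S → ℝ)
    (hf : IsFamily m 𝕊 p) (hc : Consistent m 𝕊 p)
    {S T : Finset (Fin d)} (hS : S ∈ 𝕊) (hT : T ∈ 𝕊)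
    {W : Finset (Fin d)} (hWS : W ⊆ S) :
    Dq m p f T (W ∩ T)
      = (N m Wᶜ)⁻¹ * (N m Sᶜ)⁻¹
          * ∑ x : Full m, Mar m W (fun y => p S (proj m S y)) x * f T (proj m T x)
        - (N m univ)⁻¹ * ∑ x : Full m, f T (proj m T x) := by
  classical
  set A := ∑ x : Full m, Mar m W (fun y => p S (proj m S y)) x * f T (proj m T x) with hA
  set B := ∑ x : Full m, Mar m (T ∩ W) (fun y => p T (proj m T y)) x * f T (proj m T x) with hB
  have hG : ∀ x y : Full m, proj m T x = proj m T y
      → f T (proj m T x) = f T (proj m T y) := fun x y h => by rw [h]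
  have h1 : ∑ x : Full m, Mar m T (Mar m W (fun y => p S (proj m S y))) x * f T (proj m T x)
      = N m Tᶜ * A := int_out m T _ _ hG
  have h2 : ∀ x : Full m, Mar m T (Mar m W (fun y => p S (proj m S y))) x
      = N m (T ∪ W)ᶜ * Mar m (T ∩ W) (fun y => p S (proj m S y)) x :=
    comp m T W _
  have h3 : N m Tᶜ * ∑ x : Full m, Mar m (T ∩ W) (fun y => p S (proj m S y)) x
        * f T (proj m T x) = N m Sᶜ * B := by
    rw [hB, Finset.mul_sum, Finset.mul_sum]
    refine Finset.sum_congr rfl fun x _ => ?_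
    have := gcons m hm hf hc hS hT
      (Finset.inter_subset_right.trans hWS) Finset.inter_subset_left x
    calc N m Tᶜ * (Mar m (T ∩ W) (fun y => p S (proj m S y)) x * f T (proj m T x))
        = (N m Tᶜ * Mar m (T ∩ W) (fun y => p S (proj m S y)) x) * f T (proj m T x) := by ring
      _ = (N m Sᶜ * Mar m (T ∩ W) (fun y => p T (proj m T y)) x) * f T (proj m T x) := by
          rw [this]
      _ = N m Sᶜ * (Mar m (T ∩ W) (fun y => p T (proj m T y)) x * f T (proj m T x)) := by ring
  have h4 : N m Tᶜ * (N m Tᶜ * A) = N m (T ∪ W)ᶜ * (N m Sᶜ * B) := by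
    rw [← h1]
    simp only [h2]
    rw [← h3, Finset.mul_sum, Finset.mul_sum, Finset.mul_sum]
    exact Finset.sum_congr rfl fun x _ => by ring
  have hid : N m (T ∪ W)ᶜ * N m (T ∩ W)ᶜ = N m Tᶜ * N m Wᶜ := N_compl_pair m T W
  have e1 : N m Tᶜ ≠ 0 := N_ne m hm _
  have e2 : N m Wᶜ ≠ 0 := N_ne m hm _
  have e3 : N m Sᶜ ≠ 0 := N_ne m hm _
  have e4 : N m (T ∩ W)ᶜ ≠ 0 := N_ne m hm _
  have e5 : N m (T ∪ W)ᶜ ≠ 0 := N_ne m hm _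
  unfold Dq
  rw [Finset.inter_comm W T, ← hB]
  have hmain : (N m (T ∩ W)ᶜ)⁻¹ * (N m Tᶜ)⁻¹ * B = (N m Wᶜ)⁻¹ * (N m Sᶜ)⁻¹ * A := by
    field_simp
    apply mul_left_cancel₀ e1
    linear_combination (-(N m (T ∩ W)ᶜ)) * h4 + (-(N m Sᶜ) * B) * hid
  rw [hmain]

lemma rel_sum (hm : ∀ j, 0 < m j) {𝕊 : Finset (Finset (Fin d))}
    {p : ∀ S : Finset (Fin d), Cell m S → ℝ} (f : ∀ S : Finset (Fin d), Cell m S → ℝ)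
    (hf : IsFamily m 𝕊 p) (hc : Consistent m 𝕊 p) {c : ℝ}
    (hpt : ∀ x : Full m, ∑ T ∈ 𝕊, f T (proj m T x) = c)
    {S W : Finset (Fin d)} (hS : S ∈ 𝕊) (hWS : W ⊆ S) :
    ∑ T ∈ 𝕊, Dq m p f T (W ∩ T) = 0 := by
  classical
  have hkey : ∀ T ∈ 𝕊, Dq m p f T (W ∩ T)
      = (N m Wᶜ)⁻¹ * (N m Sᶜ)⁻¹
          * ∑ x : Full m, Mar m W (fun y => p S (proj m S y)) x * f T (proj m T x)
        - (N m univ)⁻¹ * ∑ x : Full m, f T (proj m T x) :=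
    fun T hT => Dq_key m hm f hf hc hS hT hWS
  rw [Finset.sum_congr rfl hkey, Finset.sum_sub_distrib]
  have h1 : ∑ T ∈ 𝕊, (N m Wᶜ)⁻¹ * (N m Sᶜ)⁻¹
        * ∑ x : Full m, Mar m W (fun y => p S (proj m S y)) x * f T (proj m T x)
      = (N m Wᶜ)⁻¹ * (N m Sᶜ)⁻¹ * (c * (N m Wᶜ * N m Sᶜ)) := by
    rw [← Finset.mul_sum]
    congr 1
    rw [Finset.sum_comm]
    calc ∑ x : Full m, ∑ T ∈ 𝕊, Mar m W (fun y => p S (proj m S y)) x * f T (proj m T x)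
        = ∑ x : Full m, Mar m W (fun y => p S (proj m S y)) x * c := by
          refine Finset.sum_congr rfl fun x _ => ?_
          rw [← Finset.mul_sum, hpt x]
      _ = (N m Wᶜ * N m Sᶜ) * c := by
          rw [← Finset.sum_mul, sum_Mar m W _, sum_lift m (p S) (hf S hS).2, mul_assoc]
      _ = c * (N m Wᶜ * N m Sᶜ) := by ring
  have h2 : ∑ T ∈ 𝕊, (N m univ)⁻¹ * ∑ x : Full m, f T (proj m T x)
      = (N m univ)⁻¹ * (c * N m univ) := by
    rw [← Finset.mul_sum]
    congr 1
    rw [Finset.sum_comm]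
    calc ∑ x : Full m, ∑ T ∈ 𝕊, f T (proj m T x)
        = ∑ x : Full m, c := Finset.sum_congr rfl fun x _ => hpt x
      _ = (Fintype.card (Full m) : ℝ) * c := by
          rw [Finset.sum_const, nsmul_eq_mul, Finset.card_univ]
      _ = c * N m univ := by rw [card_full]; ring
  rw [h1, h2]
  have e1 : N m Wᶜ ≠ 0 := N_ne m hm _
  have e2 : N m Sᶜ ≠ 0 := N_ne m hm _
  have e3 : N m univ ≠ 0 := N_ne m hm _
  field_simp
  ring

lemma sign_sum {V T : Finset (Fin d)} (hVT : V ⊆ T) :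
    ∑ S ∈ T.powerset.filter (fun S => V ⊆ S), (-1 : ℝ) ^ (S \ V).card
      = if V = T then 1 else 0 := by
  classical
  have hre : ∑ S ∈ T.powerset.filter (fun S => V ⊆ S), (-1 : ℝ) ^ (S \ V).card
      = ∑ U ∈ (T \ V).powerset, (-1 : ℝ) ^ U.card := by
    refine Finset.sum_nbij' (fun S => S \ V) (fun U => V ∪ U) ?_ ?_ ?_ ?_ ?_
    · intro S hS
      rw [Finset.mem_filter, Finset.mem_powerset] at hS
      exact Finset.mem_powerset.2 (Finset.sdiff_subset_sdiff hS.1 (Finset.Subset.refl V))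
    · intro U hU
      rw [Finset.mem_powerset] at hU
      rw [Finset.mem_filter, Finset.mem_powerset]
      exact ⟨Finset.union_subset hVT (hU.trans Finset.sdiff_subset), Finset.subset_union_left⟩
    · intro S hS
      rw [Finset.mem_filter] at hS
      exact Finset.union_sdiff_of_subset hS.2
    · intro U hU
      rw [Finset.mem_powerset] at hU
      exact Finset.union_sdiff_cancel_left
        (Finset.disjoint_left.2 fun a haV haU => (Finset.mem_sdiff.1 (hU haU)).2 haV)
    · intro S _; rfl
  rw [hre]
  have hz := Finset.sum_powerset_neg_one_pow_card (x := T \ V)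
  have : ((∑ U ∈ (T \ V).powerset, (-1 : ℤ) ^ U.card : ℤ) : ℝ)
      = ∑ U ∈ (T \ V).powerset, (-1 : ℝ) ^ U.card := by push_cast; rfl
  rw [← this, hz]
  by_cases h : V = T
  · rw [if_pos h, if_pos (by rw [h, Finset.sdiff_self])]
    norm_num
  · rw [if_neg h, if_neg (fun hh => h (Finset.Subset.antisymm hVT
      (Finset.sdiff_eq_empty_iff_subset.1 hh)))]
    norm_num

lemma mob_inv (g : Finset (Fin d) → ℝ) (T : Finset (Fin d)) :
    ∑ S ∈ T.powerset, ∑ V ∈ S.powerset, (-1 : ℝ) ^ (S \ V).card * g V = g T := by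
  classical
  have hstep : ∀ S ∈ T.powerset, ∑ V ∈ S.powerset, (-1 : ℝ) ^ (S \ V).card * g V
      = ∑ V ∈ T.powerset, if V ⊆ S then (-1 : ℝ) ^ (S \ V).card * g V else 0 := by
    intro S hS
    rw [← Finset.sum_filter]
    refine (Finset.sum_congr ?_ fun V _ => rfl)
    ext V
    simp only [Finset.mem_powerset, Finset.mem_filter]
    exact ⟨fun h => ⟨h.trans (Finset.mem_powerset.1 hS), h⟩, fun h => h.2⟩
  rw [Finset.sum_congr rfl hstep, Finset.sum_comm]
  have hinner : ∀ V ∈ T.powerset,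
      ∑ S ∈ T.powerset, (if V ⊆ S then (-1 : ℝ) ^ (S \ V).card * g V else 0)
        = (if V = T then 1 else 0) * g V := by
    intro V hV
    rw [← Finset.sum_filter, ← sign_sum (Finset.mem_powerset.1 hV), Finset.sum_mul]
  rw [Finset.sum_congr rfl hinner]
  calc ∑ V ∈ T.powerset, (if V = T then (1:ℝ) else 0) * g V
      = ∑ V ∈ T.powerset, (if V = T then g V else 0) :=
        Finset.sum_congr rfl fun V _ => by split <;> ring
    _ = g T := by rw [Finset.sum_ite_eq' T.powerset T g, if_pos (Finset.mem_powerset_self T)]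

lemma cancel_sum {S T : Finset (Fin d)} (hne : ¬ S ⊆ T) (g : Finset (Fin d) → ℝ) :
    ∑ V ∈ S.powerset, (-1 : ℝ) ^ (S \ V).card * g (V ∩ T) = 0 := by
  classical
  obtain ⟨j, hjS, hjT⟩ := Finset.not_subset.1 hne
  refine Finset.sum_involution
    (fun V _ => if j ∈ V then V.erase j else insert j V) ?_ ?_ ?_ ?_
  · intro V hV
    by_cases hj : j ∈ V
    · simp only [if_pos hj]
      have hint : V.erase j ∩ T = V ∩ T := by
        ext a
        simp only [Finset.mem_inter, Finset.mem_erase]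
        exact ⟨fun h => ⟨h.1.2, h.2⟩, fun h => ⟨⟨fun ha => hjT (ha ▸ h.2), h.1⟩, h.2⟩⟩
      rw [hint]
      have hcard : (S \ V.erase j).card = (S \ V).card + 1 := by
        have : S \ V.erase j = insert j (S \ V) := by
          ext a
          simp only [Finset.mem_sdiff, Finset.mem_erase, Finset.mem_insert]
          constructor
          · rintro ⟨haS, haV⟩
            by_cases haj : a = j
            · exact Or.inl haj
            · exact Or.inr ⟨haS, fun hav => haV ⟨haj, hav⟩⟩
          · rintro (rfl | ⟨haS, haV⟩)
            · exact ⟨hjS, fun h => h.1 rfl⟩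
            · exact ⟨haS, fun h => haV h.2⟩
        rw [this, Finset.card_insert_of_notMem (by simp [Finset.mem_sdiff, hj])]
      rw [hcard]
      ring
    · simp only [if_neg hj]
      have hint : insert j V ∩ T = V ∩ T := by
        ext a
        simp only [Finset.mem_inter, Finset.mem_insert]
        constructor
        · rintro ⟨rfl | haV, haT⟩
          · exact absurd haT hjT
          · exact ⟨haV, haT⟩
        · exact fun h => ⟨Or.inr h.1, h.2⟩
      rw [hint]
      have hcard : (S \ V).card = (S \ insert j V).card + 1 := by
        have : S \ V = insert j (S \ insert j V) := by
          ext a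
          simp only [Finset.mem_sdiff, Finset.mem_insert]
          constructor
          · rintro ⟨haS, haV⟩
            by_cases haj : a = j
            · exact Or.inl haj
            · exact Or.inr ⟨haS, fun h => h.elim haj haV⟩
          · rintro (rfl | ⟨haS, haV⟩)
            · exact ⟨hjS, hj⟩
            · exact ⟨haS, fun h => haV (Or.inr h)⟩
        rw [this, Finset.card_insert_of_notMem (by simp [Finset.mem_sdiff])]
      rw [hcard]
      ring
  · intro V hV h
    by_cases hj : j ∈ V
    · simp only [if_pos hj]
      intro hh
      exact (by rw [← hh] at hj; exact Finset.notMem_erase j V hj)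
    · simp only [if_neg hj]
      intro hh
      exact hj (hh ▸ Finset.mem_insert_self j V)
  · intro V hV
    rw [Finset.mem_powerset] at hV ⊢
    by_cases hj : j ∈ V
    · simp only [if_pos hj]
      exact (Finset.erase_subset j V).trans hV
    · simp only [if_neg hj]
      exact Finset.insert_subset hjS hV
  · intro V hV
    by_cases hj : j ∈ V
    · simp [hj, Finset.insert_erase hj]
    · simp [hj, Finset.erase_insert hj]

lemma step6 (hm : ∀ j, 0 < m j) {𝕊 : Finset (Finset (Fin d))}
    {p : ∀ S : Finset (Fin d), Cell m S → ℝ} (f : ∀ S : Finset (Fin d), Cell m S → ℝ)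
    (hf : IsFamily m 𝕊 p) (hc : Consistent m 𝕊 p) {c : ℝ}
    (hpt : ∀ x : Full m, ∑ T ∈ 𝕊, f T (proj m T x) = c) :
    ∑ T ∈ 𝕊, Dq m p f T T = 0 := by
  classical
  set 𝒜 := 𝕊.biUnion Finset.powerset with h𝒜
  have hfil : ∀ T ∈ 𝕊, 𝒜.filter (fun S => S ⊆ T) = T.powerset := by
    intro T hT
    ext S
    simp only [Finset.mem_filter, Finset.mem_powerset, h𝒜, Finset.mem_biUnion]
    exact ⟨fun h => h.2, fun h => ⟨⟨T, hT, h⟩, h⟩⟩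
  calc ∑ T ∈ 𝕊, Dq m p f T T
      = ∑ T ∈ 𝕊, ∑ S ∈ T.powerset, ∑ V ∈ S.powerset,
          (-1 : ℝ) ^ (S \ V).card * Dq m p f T V :=
        Finset.sum_congr rfl fun T _ => (mob_inv (Dq m p f T) T).symm
    _ = ∑ T ∈ 𝕊, ∑ S ∈ 𝒜, (if S ⊆ T then ∑ V ∈ S.powerset,
          (-1 : ℝ) ^ (S \ V).card * Dq m p f T V else 0) := by
        refine Finset.sum_congr rfl fun T hT => ?_
        rw [← Finset.sum_filter, hfil T hT]
    _ = ∑ S ∈ 𝒜, ∑ T ∈ 𝕊, (if S ⊆ T then ∑ V ∈ S.powerset,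
          (-1 : ℝ) ^ (S \ V).card * Dq m p f T V else 0) := Finset.sum_comm
    _ = 0 := by
        refine Finset.sum_eq_zero fun S hS => ?_
        obtain ⟨S₀, hS₀, hSS₀⟩ := Finset.mem_biUnion.1 hS
        have hSS₀' : S ⊆ S₀ := Finset.mem_powerset.1 hSS₀
        have hflip : ∀ T ∈ 𝕊, (if S ⊆ T then ∑ V ∈ S.powerset,
            (-1 : ℝ) ^ (S \ V).card * Dq m p f T V else 0)
            = ∑ V ∈ S.powerset, (-1 : ℝ) ^ (S \ V).card * Dq m p f T (V ∩ T) := by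
          intro T hT
          by_cases h : S ⊆ T
          · rw [if_pos h]
            refine Finset.sum_congr rfl fun V hV => ?_
            rw [Finset.inter_eq_left.2 ((Finset.mem_powerset.1 hV).trans h)]
          · rw [if_neg h]
            exact (cancel_sum h (Dq m p f T)).symm
        rw [Finset.sum_congr rfl hflip, Finset.sum_comm]
        refine Finset.sum_eq_zero fun V hV => ?_
        rw [← Finset.mul_sum,
          rel_sum m hm f hf hc hpt hS₀ ((Finset.mem_powerset.1 hV).trans hSS₀'), mul_zero]

end St3

/-- Proposition: full-dimensionality. Any affine functional that is constant on
the set of compatible families is also constant (with the same value) on the set of consistent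
families; i.e. `𝒫_𝕊^0` is a full-dimensional subset of `𝒫_𝕊^cons`. -/
theorem statement_3 {d : ℕ} (m : Fin d → ℕ) (hm : ∀ j, 0 < m j)
    (𝕊 : Finset (Finset (Fin d))) (h𝕊 : 𝕊.Nonempty) (hSne : ∀ S ∈ 𝕊, S.Nonempty)
    (f : ∀ S : Finset (Fin d), Cell m S → ℝ) (c : ℝ)
    (h0 : ∀ p : ∀ S : Finset (Fin d), Cell m S → ℝ,
      IsFamily m 𝕊 p → Compatible m 𝕊 p → ∑ S ∈ 𝕊, ∑ y, f S y * p S y = c) :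
    ∀ p : ∀ S : Finset (Fin d), Cell m S → ℝ,
      IsFamily m 𝕊 p → Consistent m 𝕊 p → ∑ S ∈ 𝕊, ∑ y, f S y * p S y = c := by
  intro p hf hc
  classical
  have hpt : ∀ x : Full m, ∑ T ∈ 𝕊, f T (proj m T x) = c := by
    intro x
    have hfam : IsFamily m 𝕊 (fun S y => if proj m S x = y then (1:ℝ) else 0) := by
      intro S _
      constructor
      · intro y; dsimp only; split <;> norm_num
      · simp
    have hcomp : Compatible m 𝕊 (fun S y => if proj m S x = y then (1:ℝ) else 0) := by
      refine ⟨fun z => if z = x then 1 else 0,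
        ⟨fun z => by dsimp only; split <;> norm_num, by simp⟩, ?_⟩
      intro S _ y
      dsimp only
      calc (if proj m S x = y then (1:ℝ) else 0)
          = ∑ z : Full m, (if z = x then (if proj m S z = y then (1:ℝ) else 0) else 0) := by
            rw [Finset.sum_ite_eq' Finset.univ x
              (fun z => if proj m S z = y then (1:ℝ) else 0), if_pos (Finset.mem_univ x)]
        _ = ∑ z : Full m, (if proj m S z = y then (if z = x then (1:ℝ) else 0) else 0) := by
            refine Finset.sum_congr rfl fun z _ => ?_
            by_cases h1 : z = x <;> by_cases h2 : proj m S z = y <;> simp [h1, h2]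
    have h := h0 _ hfam hcomp
    simp only [mul_ite, mul_one, mul_zero] at h
    have hsum : ∀ S ∈ 𝕊, ∑ y, (if proj m S x = y then f S y else 0) = f S (proj m S x) :=
      fun S _ => by rw [Finset.sum_ite_eq, if_pos (Finset.mem_univ _)]
    rw [Finset.sum_congr rfl hsum] at h
    exact h
  have hdiag : ∀ T ∈ 𝕊, ∑ y, f T y * p T y
      = St3.Dq m p f T T + (St3.N m Finset.univ)⁻¹ * (St3.N m Tᶜ * ∑ y, f T y) := fun T _ => by
    rw [St3.Dq_diag m hm p f T]; ring
  rw [Finset.sum_congr rfl hdiag, Finset.sum_add_distrib,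
    St3.step6 m hm f hf hc hpt, zero_add]
  have huni : ∑ T ∈ 𝕊, St3.N m Tᶜ * ∑ y, f T y = c * St3.N m Finset.univ := by
    have h1 : ∑ x : Full m, ∑ T ∈ 𝕊, f T (proj m T x) = ∑ x : Full m, c :=
      Finset.sum_congr rfl fun x _ => hpt x
    rw [Finset.sum_comm] at h1
    have h2 : ∀ T ∈ 𝕊, ∑ x : Full m, f T (proj m T x) = St3.N m Tᶜ * ∑ y, f T y :=
      fun T _ => St3.sum_proj m T (f T)
    rw [Finset.sum_congr rfl h2] at h1
    rw [h1, Finset.sum_const, nsmul_eq_mul, Finset.card_univ, St3.card_full]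
    ring
  rw [← Finset.mul_sum, huni]
  have e3 : St3.N m Finset.univ ≠ 0 := St3.N_ne m hm _
  field_simp
end

section
/- For every P_𝕊 ∈ 𝒫_𝕊: (i) the supremum defining R(P_𝕊) is attained, i.e. there exists f_𝕊 ∈ 𝒢_𝕊^+ with R(P_𝕊, f_𝕊) = R(P_𝕊); and (ii) there exist Q_𝕊 ∈ 𝒫_𝕊^0 and T_𝕊 ∈ 𝒫_𝕊 such that P_S = (1 − R(P_𝕊)) Q_S + R(P_𝕊) T_S for all S ∈ 𝕊. -/
open Finset

section Aux
variable {d : ℕ}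

/-- Margin of a (sub)measure `μ` on the full space. -/
noncomputable def margF (m : Fin d → ℕ) (μ : Full m → ℝ) (S : Finset (Fin d)) (y : Cell m S) : ℝ :=
  ∑ x : Full m, if proj m S x = y then μ x else 0

lemma margF_nonneg {m : Fin d → ℕ} {μ : Full m → ℝ} (hμ : ∀ x, 0 ≤ μ x) (S : Finset (Fin d))
    (y : Cell m S) : 0 ≤ margF m μ S y := by
  refine Finset.sum_nonneg fun x _ => ?_
  split <;> simp [hμ x]

lemma sum_margF (m : Fin d → ℕ) (μ : Full m → ℝ) (S : Finset (Fin d)) :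
    ∑ y, margF m μ S y = ∑ x, μ x := by
  unfold margF
  rw [Finset.sum_comm]
  simp

lemma margF_le_sum {m : Fin d → ℕ} {μ : Full m → ℝ} (hμ : ∀ x, 0 ≤ μ x) (S : Finset (Fin d))
    (y : Cell m S) : margF m μ S y ≤ ∑ x, μ x := by
  refine Finset.sum_le_sum fun x _ => ?_
  split <;> simp [hμ x]

lemma le_margF_proj {m : Fin d → ℕ} {μ : Full m → ℝ} (hμ : ∀ x, 0 ≤ μ x) (S : Finset (Fin d))
    (x₀ : Full m) : μ x₀ ≤ margF m μ S (proj m S x₀) := by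
  have := Finset.single_le_sum (f := fun x => if proj m S x = proj m S x₀ then μ x else 0)
    (fun x _ => by split <;> simp [hμ x]) (Finset.mem_univ x₀)
  simpa [margF] using this

lemma swap_margF (m : Fin d → ℕ) (μ : Full m → ℝ) (S : Finset (Fin d)) (g : Cell m S → ℝ) :
    ∑ y, g y * margF m μ S y = ∑ x, g (proj m S x) * μ x := by
  simp only [margF, Finset.mul_sum]
  rw [Finset.sum_comm]
  refine Finset.sum_congr rfl fun x _ => ?_
  rw [Finset.sum_congr rfl (g := fun y => if proj m S x = y then g y * μ x else 0)
    (fun y _ => by split <;> simp_all)]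
  simp

lemma margF_single (m : Fin d → ℕ) (x₀ : Full m) (S : Finset (Fin d)) (y : Cell m S) :
    margF m (Pi.single x₀ 1) S y = if proj m S x₀ = y then 1 else 0 := by
  unfold margF
  rw [Finset.sum_congr rfl (g := fun x => if x = x₀ then (if proj m S x = y then (1:ℝ) else 0) else 0)
    (fun x _ => by simp only [Pi.single_apply]; split <;> split <;> simp_all)]
  simp

lemma margF_add (m : Fin d → ℕ) (μ ν : Full m → ℝ) (S : Finset (Fin d)) (y : Cell m S) :
    margF m (μ + ν) S y = margF m μ S y + margF m ν S y := by
  unfold margF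
  rw [← Finset.sum_add_distrib]
  refine Finset.sum_congr rfl fun x _ => ?_
  split <;> simp

lemma margF_smul (m : Fin d → ℕ) (c : ℝ) (μ : Full m → ℝ) (S : Finset (Fin d)) (y : Cell m S) :
    margF m (c • μ) S y = c * margF m μ S y := by
  unfold margF
  rw [Finset.mul_sum]
  refine Finset.sum_congr rfl fun x _ => ?_
  split <;> simp


/-- The primal feasible set. -/
def Feas (m : Fin d → ℕ) (𝕊 : Finset (Finset (Fin d)))
    (p : ∀ S : Finset (Fin d), Cell m S → ℝ) : Set (Full m → ℝ) :=
  {μ | (∀ x, 0 ≤ μ x) ∧ ∀ S ∈ 𝕊, ∀ y, margF m μ S y ≤ p S y}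

lemma continuous_margF (m : Fin d → ℕ) (S : Finset (Fin d)) (y : Cell m S) :
    Continuous (fun μ : Full m → ℝ => margF m μ S y) := by
  unfold margF
  refine continuous_finset_sum _ fun x _ => ?_
  by_cases h : proj m S x = y <;> simp [h]
  · exact continuous_apply x
  · exact continuous_const

lemma exists_maxFeas (m : Fin d → ℕ) (𝕊 : Finset (Finset (Fin d)))
    (p : ∀ S : Finset (Fin d), Cell m S → ℝ) (h𝕊 : 𝕊.Nonempty) (hp : IsFamily m 𝕊 p) :
    ∃ μ ∈ Feas m 𝕊 p, IsMaxOn (fun μ => ∑ x, μ x) (Feas m 𝕊 p) μ := by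
  obtain ⟨S₀, hS₀⟩ := h𝕊
  have hsub : Feas m 𝕊 p ⊆ Set.Icc (0 : Full m → ℝ) 1 := by
    intro μ hμ
    constructor
    · intro x; exact hμ.1 x
    · intro x
      have h1 : μ x ≤ margF m μ S₀ (proj m S₀ x) := le_margF_proj hμ.1 _ _
      have h2 : margF m μ S₀ (proj m S₀ x) ≤ p S₀ (proj m S₀ x) := hμ.2 S₀ hS₀ _
      have h3 : p S₀ (proj m S₀ x) ≤ 1 := by
        have h4 := (hp S₀ hS₀).2
        have h5 := Finset.single_le_sum (f := p S₀) (fun y _ => (hp S₀ hS₀).1 y)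
          (Finset.mem_univ (proj m S₀ x))
        linarith
      calc μ x ≤ _ := h1
        _ ≤ _ := h2
        _ ≤ 1 := h3
  have hclosed : IsClosed (Feas m 𝕊 p) := by
    have : Feas m 𝕊 p = (⋂ x, {μ : Full m → ℝ | 0 ≤ μ x}) ∩
        ⋂ S, ⋂ (_ : S ∈ 𝕊), ⋂ y, {μ : Full m → ℝ | margF m μ S y ≤ p S y} := by
      ext μ
      simp only [Feas, Set.mem_setOf_eq, Set.mem_inter_iff, Set.mem_iInter]
    rw [this]
    refine IsClosed.inter (isClosed_iInter fun x => ?_)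
      (isClosed_iInter fun S => isClosed_iInter fun _ => isClosed_iInter fun y => ?_)
    · exact isClosed_le continuous_const (continuous_apply x)
    · exact isClosed_le (continuous_margF m S y) continuous_const
  have hcompact : IsCompact (Feas m 𝕊 p) := (isCompact_Icc).of_isClosed_subset hclosed hsub
  have hne : (Feas m 𝕊 p).Nonempty := by
    refine ⟨0, fun x => le_rfl, fun S hS y => ?_⟩
    have : margF m (0 : Full m → ℝ) S y = 0 := by simp [margF]
    rw [this]
    exact (hp S hS).1 y
  exact hcompact.exists_isMaxOn hne (continuous_finset_sum _ fun x _ => continuous_apply x).continuousOn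

/-- The linear map generating the primal cone. -/
noncomputable def Tcone (m : Fin d → ℕ) (𝕊 : Finset (Finset (Fin d))) :
    ((Full m → ℝ) × (∀ S : Finset (Fin d), Cell m S → ℝ)) →ₗ[ℝ]
      ((∀ S : Finset (Fin d), Cell m S → ℝ) × ℝ) where
  toFun w := (fun S y => (if S ∈ 𝕊 then margF m w.1 S y else 0) + w.2 S y, ∑ x, w.1 x)
  map_add' u v := by
    refine Prod.ext ?_ ?_
    · funext S y
      simp only [Prod.fst_add, Prod.snd_add, Pi.add_apply, margF_add]
      split <;> ring
    · simp [Finset.sum_add_distrib]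
  map_smul' c u := by
    refine Prod.ext ?_ ?_
    · funext S y
      simp only [Prod.smul_fst, Prod.smul_snd, Pi.smul_apply, margF_smul, smul_eq_mul,
        RingHom.id_apply]
      split <;> ring
    · simp [Finset.mul_sum]

lemma isClosed_cone (m : Fin d → ℕ) (𝕊 : Finset (Finset (Fin d))) :
    IsClosed (Tcone m 𝕊 '' (Set.Ici 0)) := by
  have hTcont : Continuous (Tcone m 𝕊) := LinearMap.continuous_of_finiteDimensional _
  refine IsSeqClosed.isClosed ?_
  intro f v hf hv
  choose g hgK hgf using hf
  obtain ⟨M, hM⟩ : ∃ M, ∀ n, ‖f n‖ ≤ M := by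
    obtain ⟨M, hM⟩ := (hv.norm).bddAbove_range
    exact ⟨M, fun n => hM ⟨n, rfl⟩⟩
  have hg0 : ∀ n, (0 : Full m → ℝ) ≤ (g n).1 ∧ (0 : ∀ S : Finset (Fin d), Cell m S → ℝ) ≤ (g n).2 :=
    fun n => Prod.le_def.mp (hgK n)
  have hsnd : ∀ n, (f n).2 = ∑ x, (g n).1 x := fun n => by rw [← hgf n]; rfl
  have hfst : ∀ n S y, (f n).1 S y
      = (if S ∈ 𝕊 then margF m (g n).1 S y else 0) + (g n).2 S y := fun n S y => by
    rw [← hgf n]; rfl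
  have hsndM : ∀ n, (f n).2 ≤ M := fun n =>
    le_trans (le_trans (le_abs_self _) (norm_snd_le (f n))) (hM n)
  have hfstM : ∀ n S y, (f n).1 S y ≤ M := by
    intro n S y
    refine le_trans (le_abs_self _) (le_trans ?_ (hM n))
    calc |(f n).1 S y| ≤ ‖(f n).1 S‖ := by
          simpa using norm_le_pi_norm ((f n).1 S) y
      _ ≤ ‖(f n).1‖ := norm_le_pi_norm ((f n).1) S
      _ ≤ ‖f n‖ := norm_fst_le (f n)
  have hmem : ∀ n, g n ∈ Set.Icc (0 : (Full m → ℝ) × (∀ S : Finset (Fin d), Cell m S → ℝ))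
      ((fun _ => M), (fun _ _ => M)) := by
    intro n
    refine Set.mem_Icc.mpr ⟨hgK n, Prod.le_def.mpr ⟨fun x => ?_, fun S => fun y => ?_⟩⟩
    · calc (g n).1 x ≤ ∑ x', (g n).1 x' :=
            Finset.single_le_sum (fun x' _ => (hg0 n).1 x') (Finset.mem_univ x)
        _ = (f n).2 := (hsnd n).symm
        _ ≤ M := hsndM n
    · have h1 : 0 ≤ (if S ∈ 𝕊 then margF m (g n).1 S y else 0) := by
        split
        · exact margF_nonneg (fun x => (hg0 n).1 x) S y
        · exact le_rfl
      have := hfst n S y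
      have := hfstM n S y
      linarith
  have hcpt : IsCompact (Set.Icc (0 : (Full m → ℝ) × (∀ S : Finset (Fin d), Cell m S → ℝ))
      ((fun _ => M), (fun _ _ => M))) := isCompact_Icc
  obtain ⟨w, hw, φ, hφ, hconv⟩ := hcpt.tendsto_subseq hmem
  have h1 : Filter.Tendsto (f ∘ φ) Filter.atTop (nhds (Tcone m 𝕊 w)) := by
    have h2 := (hTcont.tendsto w).comp hconv
    have h3 : (⇑(Tcone m 𝕊) ∘ (g ∘ φ)) = f ∘ φ := by
      funext n; exact hgf (φ n)
    rwa [h3] at h2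
  have h2 : Filter.Tendsto (f ∘ φ) Filter.atTop (nhds v) := hv.comp (hφ.tendsto_atTop)
  exact ⟨w, (Set.mem_Icc.mp hw).1, tendsto_nhds_unique h1 h2⟩


lemma pair_expand (m : Fin d → ℕ) (v : ∀ S : Finset (Fin d), Cell m S → ℝ) (t : ℝ) :
    ((v, t) : (∀ S : Finset (Fin d), Cell m S → ℝ) × ℝ)
      = (∑ S : Finset (Fin d), ∑ y, (v S y) •
          ((Pi.single S (Pi.single y (1:ℝ)) : ∀ S : Finset (Fin d), Cell m S → ℝ), (0:ℝ)))
        + t • ((0 : ∀ S : Finset (Fin d), Cell m S → ℝ), (1:ℝ)) := by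
  have h1 : ∀ (S : Finset (Fin d)) (y : Cell m S) (c : ℝ),
      c • (Pi.single S (Pi.single y (1:ℝ)) : ∀ S : Finset (Fin d), Cell m S → ℝ)
        = Pi.single S (Pi.single y c) := by
    intro S y c
    rw [← Pi.single_smul, ← Pi.single_smul, smul_eq_mul, mul_one]
  refine Prod.ext ?_ ?_
  · simp only [Prod.fst_add, Prod.fst_sum, Prod.smul_fst, smul_zero, add_zero, smul_eq_mul, h1]
    calc v = ∑ S : Finset (Fin d), Pi.single S (v S) := (Finset.univ_sum_single v).symm
      _ = ∑ S : Finset (Fin d), ∑ y, Pi.single S (Pi.single y (v S y)) := by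
          refine Finset.sum_congr rfl fun S _ => ?_
          conv_lhs => rw [← Finset.univ_sum_single (v S)]
          exact map_sum (LinearMap.single ℝ (fun S => Cell m S → ℝ) S) _ _
  · simp [Prod.snd_sum]

set_option maxHeartbeats 2000000 in
lemma exists_dual_lt (m : Fin d → ℕ) (𝕊 : Finset (Finset (Fin d)))
    (p : ∀ S : Finset (Fin d), Cell m S → ℝ)
    (μs : Full m → ℝ) (hμs : μs ∈ Feas m 𝕊 p)
    (hmax : IsMaxOn (fun μ => ∑ x, μ x) (Feas m 𝕊 p) μs)
    (γ : ℝ) (hγ : ∑ x, μs x < γ) :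
    ∃ g : ∀ S : Finset (Fin d), Cell m S → ℝ, (∀ S y, 0 ≤ g S y) ∧
      (∀ x, 1 ≤ ∑ S ∈ 𝕊, g S (proj m S x)) ∧
      ∑ S ∈ 𝕊, ∑ y, g S y * p S y < γ := by
  classical
  set T := Tcone m 𝕊 with hT
  set C : Set ((∀ S : Finset (Fin d), Cell m S → ℝ) × ℝ) := T '' (Set.Ici 0) with hC
  have hCconv : Convex ℝ C := (convex_Ici _).linear_image T
  have hCclosed : IsClosed C := isClosed_cone m 𝕊
  set p' : ∀ S : Finset (Fin d), Cell m S → ℝ :=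
    fun S y => if S ∈ 𝕊 then p S y else 0 with hp'
  have hb : ((p', γ) : (∀ S : Finset (Fin d), Cell m S → ℝ) × ℝ) ∉ C := by
    rintro ⟨⟨μ, s⟩, hK, hTw⟩
    obtain ⟨hμ0, hs0⟩ := Prod.le_def.mp hK
    have h2 : ∑ x, μ x = γ := congrArg Prod.snd hTw
    have hfe : μ ∈ Feas m 𝕊 p := by
      refine ⟨fun x => hμ0 x, fun S hS y => ?_⟩
      have h3 : (if S ∈ 𝕊 then margF m μ S y else 0) + s S y = p' S y := by
        have := congrArg Prod.fst hTw
        exact congrFun (congrFun this S) y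
      rw [hp'] at h3
      simp only [hS, if_true] at h3
      have hs' : (0:ℝ) ≤ s S y := hs0 S y
      linarith
    have := hmax hfe
    simp only [Set.mem_setOf_eq] at this
    rw [h2] at this
    linarith
  obtain ⟨F, u, hFC, hub⟩ := geometric_hahn_banach_closed_point hCconv hCclosed hb
  have h0C : (0 : (∀ S : Finset (Fin d), Cell m S → ℝ) × ℝ) ∈ C :=
    ⟨0, Set.mem_Ici.mpr le_rfl, map_zero T⟩
  have hu : 0 < u := by
    have := hFC 0 h0C
    rwa [map_zero] at this
  have hFle : ∀ c ∈ C, F c ≤ 0 := by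
    intro c hc
    by_contra h
    push_neg at h
    obtain ⟨w, hw, hTw⟩ := hc
    have hk : (0:ℝ) ≤ (u + 1) / F c := by positivity
    have hmem : ((u + 1) / F c) • c ∈ C := by
      refine ⟨((u + 1) / F c) • w, Set.mem_Ici.mpr (smul_nonneg hk (Set.mem_Ici.mp hw)), ?_⟩
      rw [map_smul, hTw]
    have := hFC _ hmem
    rw [map_smul, smul_eq_mul, div_mul_cancel₀ _ (ne_of_gt h)] at this
    linarith
  set g0 : ∀ S : Finset (Fin d), Cell m S → ℝ :=
    fun S y => -(F ((Pi.single S (Pi.single y (1:ℝ))), 0)) with hg0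
  set α : ℝ := -(F (0, 1)) with hα
  have hexp : ∀ (v : ∀ S : Finset (Fin d), Cell m S → ℝ) (t : ℝ),
      F (v, t) = (∑ S : Finset (Fin d), ∑ y, v S y * (- g0 S y)) + t * (- α) := by
    intro v t
    conv_lhs => rw [pair_expand m v t]
    rw [map_add, map_sum, map_smul]
    simp only [hg0, hα, neg_neg, smul_eq_mul]
    congr 1
    refine Finset.sum_congr rfl fun S _ => ?_
    rw [map_sum]
    refine Finset.sum_congr rfl fun y _ => ?_
    rw [map_smul, smul_eq_mul]
  -- g0 is nonnegative
  have hg0pos : ∀ S y, 0 ≤ g0 S y := by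
    intro S y
    have hmem : ((Pi.single S (Pi.single y (1:ℝ)) : ∀ S : Finset (Fin d), Cell m S → ℝ), (0:ℝ)) ∈ C := by
      refine ⟨(0, Pi.single S (Pi.single y (1:ℝ))), ?_, ?_⟩
      · refine Prod.le_def.mpr ⟨le_rfl, ?_⟩
        show (0 : ∀ S : Finset (Fin d), Cell m S → ℝ) ≤ Pi.single S (Pi.single y (1:ℝ))
        rw [Pi.single_nonneg, Pi.single_nonneg]
        norm_num
      · refine Prod.ext ?_ ?_
        · funext S' y'
          show (if S' ∈ 𝕊 then margF m 0 S' y' else 0) + _ = _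
          have : margF m (0 : Full m → ℝ) S' y' = 0 := by simp [margF]
          rw [this]
          simp
        · show ∑ _x : Full m, (0:ℝ) = 0
          simp
    have := hFle _ hmem
    rw [hg0]
    simp only [neg_nonneg]
    exact this
  -- constraint from point masses
  have hcons : ∀ x : Full m, ∑ S ∈ 𝕊, g0 S (proj m S x) + α ≥ 0 := by
    intro x
    have hmem : T (Pi.single x 1, 0) ∈ C := ⟨(Pi.single x 1, 0),
      Prod.le_def.mpr ⟨by
        show (0 : Full m → ℝ) ≤ Pi.single x 1
        rw [Pi.single_nonneg]; norm_num, le_rfl⟩, rfl⟩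
    have h1 := hFle _ hmem
    have h2 : T (Pi.single x (1:ℝ), (0 : ∀ S : Finset (Fin d), Cell m S → ℝ)) =
        ((fun S y => if S ∈ 𝕊 then (if proj m S x = y then (1:ℝ) else 0) else 0), (1:ℝ)) := by
      refine Prod.ext ?_ ?_
      · funext S y
        show (if S ∈ 𝕊 then margF m (Pi.single x 1) S y else 0) + 0 = _
        rw [margF_single, add_zero]
      · show ∑ x', Pi.single x (1:ℝ) x' = 1
        simp
    rw [h2, hexp] at h1
    have h3 : ∀ S : Finset (Fin d), ∑ y,
        (if S ∈ 𝕊 then (if proj m S x = y then (1:ℝ) else 0) else 0) * (- g0 S y)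
        = if S ∈ 𝕊 then -g0 S (proj m S x) else 0 := by
      intro S
      by_cases hS : S ∈ 𝕊 <;> simp only [hS, if_true, if_false, zero_mul, Finset.sum_const_zero]
      rw [Finset.sum_congr rfl (g := fun y => if proj m S x = y then -g0 S y else 0)
        (fun y _ => by by_cases hxy : proj m S x = y <;> simp [hxy])]
      simp
    have h4 : ∑ S : Finset (Fin d), ∑ y,
        (if S ∈ 𝕊 then (if proj m S x = y then (1:ℝ) else 0) else 0) * (- g0 S y)
        = - ∑ S ∈ 𝕊, g0 S (proj m S x) := by
      rw [Finset.sum_congr rfl (fun S _ => h3 S)]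
      rw [Finset.sum_ite_mem]
      simp
    rw [h4] at h1
    linarith
  -- value bound at (p', β)
  set β : ℝ := ∑ x, μs x with hβ
  have hcollapse : ∀ h : ∀ S : Finset (Fin d), Cell m S → ℝ,
      ∑ S : Finset (Fin d), ∑ y, p' S y * h S y = ∑ S ∈ 𝕊, ∑ y, p S y * h S y := by
    intro h
    have h5 : ∀ S : Finset (Fin d), ∑ y, p' S y * h S y
        = if S ∈ 𝕊 then ∑ y, p S y * h S y else 0 := by
      intro S
      by_cases hS : S ∈ 𝕊 <;> simp [hp', hS]
    rw [Finset.sum_congr rfl (fun S _ => h5 S), Finset.sum_ite_mem]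
    simp
  set A : ℝ := ∑ S ∈ 𝕊, ∑ y, g0 S y * p S y with hA
  have hApg : ∑ S ∈ 𝕊, ∑ y, p S y * - g0 S y = -A := by
    rw [hA, ← Finset.sum_neg_distrib]
    refine Finset.sum_congr rfl fun S _ => ?_
    rw [← Finset.sum_neg_distrib]
    refine Finset.sum_congr rfl fun y _ => by ring
  have hlow : -β * α ≤ A := by
    have hmem : ((p', β) : (∀ S : Finset (Fin d), Cell m S → ℝ) × ℝ) ∈ C := by
      refine ⟨(μs, fun S y => p' S y - (if S ∈ 𝕊 then margF m μs S y else 0)), ?_, ?_⟩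
      · refine Prod.le_def.mpr ⟨fun x => hμs.1 x, fun S => fun y => ?_⟩
        show (0:ℝ) ≤ p' S y - (if S ∈ 𝕊 then margF m μs S y else 0)
        by_cases hS : S ∈ 𝕊 <;> simp [hp', hS]
        exact hμs.2 S hS y
      · refine Prod.ext ?_ rfl
        funext S y
        show (if S ∈ 𝕊 then margF m μs S y else 0) + _ = p' S y
        ring
    have h1 := hFle _ hmem
    rw [hexp, hcollapse, hApg] at h1
    linarith
  have hhigh : A < -γ * α := by
    have h1 := hub
    rw [hexp, hcollapse, hApg] at h1
    linarith
  have hαneg : α < 0 := by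
    by_contra h
    push_neg at h
    nlinarith
  refine ⟨fun S y => g0 S y / (-α), fun S y => div_nonneg (hg0pos S y) (by linarith), ?_, ?_⟩
  · intro x
    rw [← Finset.sum_div]
    rw [le_div_iff₀ (by linarith : (0:ℝ) < -α)]
    have := hcons x
    linarith
  · have h6 : ∑ S ∈ 𝕊, ∑ y, g0 S y / (-α) * p S y = A / (-α) := by
      rw [hA, Finset.sum_div]
      refine Finset.sum_congr rfl fun S _ => ?_
      rw [Finset.sum_div]
      refine Finset.sum_congr rfl fun y _ => by ring
    rw [h6, div_lt_iff₀ (by linarith : (0:ℝ) < -α)]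
    nlinarith


lemma weak_duality (m : Fin d → ℕ) (𝕊 : Finset (Finset (Fin d)))
    (p : ∀ S : Finset (Fin d), Cell m S → ℝ) (μ : Full m → ℝ) (hμ : μ ∈ Feas m 𝕊 p)
    (g : ∀ S : Finset (Fin d), Cell m S → ℝ) (hg0 : ∀ S ∈ 𝕊, ∀ y, 0 ≤ g S y)
    (hg1 : ∀ x, 1 ≤ ∑ S ∈ 𝕊, g S (proj m S x)) :
    ∑ x, μ x ≤ ∑ S ∈ 𝕊, ∑ y, g S y * p S y := by
  calc ∑ x, μ x ≤ ∑ x, (∑ S ∈ 𝕊, g S (proj m S x)) * μ x :=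
        Finset.sum_le_sum fun x _ => le_mul_of_one_le_left (hμ.1 x) (hg1 x)
    _ = ∑ S ∈ 𝕊, ∑ x, g S (proj m S x) * μ x := by
        rw [Finset.sum_comm]
        exact Finset.sum_congr rfl fun x _ => by rw [Finset.sum_mul]
    _ = ∑ S ∈ 𝕊, ∑ y, g S y * margF m μ S y :=
        Finset.sum_congr rfl fun S _ => (swap_margF m μ S (g S)).symm
    _ ≤ ∑ S ∈ 𝕊, ∑ y, g S y * p S y :=
        Finset.sum_le_sum fun S hS => Finset.sum_le_sum fun y _ =>
          mul_le_mul_of_nonneg_left (hμ.2 S hS y) (hg0 S hS y)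

/-- The truncated dual feasible set. -/
def DualD (m : Fin d → ℕ) (𝕊 : Finset (Finset (Fin d))) :
    Set (∀ S : Finset (Fin d), Cell m S → ℝ) :=
  {g | (∀ S y, 0 ≤ g S y ∧ g S y ≤ 1) ∧ ∀ x : Full m, 1 ≤ ∑ S ∈ 𝕊, g S (proj m S x)}

lemma exists_minDual (m : Fin d → ℕ) (𝕊 : Finset (Finset (Fin d)))
    (p : ∀ S : Finset (Fin d), Cell m S → ℝ) (h𝕊 : 𝕊.Nonempty) :
    ∃ g ∈ DualD m 𝕊, IsMinOn (fun g : ∀ S : Finset (Fin d), Cell m S → ℝ =>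
      ∑ S ∈ 𝕊, ∑ y, g S y * p S y) (DualD m 𝕊) g := by
  have hsub : DualD m 𝕊 ⊆ Set.Icc (0 : ∀ S : Finset (Fin d), Cell m S → ℝ) 1 := by
    intro g hg
    exact ⟨fun S => fun y => (hg.1 S y).1, fun S => fun y => (hg.1 S y).2⟩
  have hcont : ∀ (S : Finset (Fin d)) (y : Cell m S),
      Continuous (fun g : ∀ S : Finset (Fin d), Cell m S → ℝ => g S y) :=
    fun S y => (continuous_apply y).comp (continuous_apply S)
  have hclosed : IsClosed (DualD m 𝕊) := by
    have : DualD m 𝕊 = (⋂ S, ⋂ y, {g : ∀ S : Finset (Fin d), Cell m S → ℝ |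
        0 ≤ g S y ∧ g S y ≤ 1}) ∩
        ⋂ x : Full m, {g : ∀ S : Finset (Fin d), Cell m S → ℝ |
          1 ≤ ∑ S ∈ 𝕊, g S (proj m S x)} := by
      ext g
      simp only [DualD, Set.mem_setOf_eq, Set.mem_inter_iff, Set.mem_iInter]
    rw [this]
    refine IsClosed.inter (isClosed_iInter fun S => isClosed_iInter fun y => ?_)
      (isClosed_iInter fun x => ?_)
    · exact IsClosed.inter (isClosed_le continuous_const (hcont S y))
        (isClosed_le (hcont S y) continuous_const)
    · exact isClosed_le continuous_const
        (continuous_finset_sum _ fun S _ => hcont S (proj m S x))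
  have hcompact : IsCompact (DualD m 𝕊) := (isCompact_Icc).of_isClosed_subset hclosed hsub
  have hne : (DualD m 𝕊).Nonempty := by
    refine ⟨fun _ _ => 1, fun S y => by norm_num, fun x => ?_⟩
    rw [Finset.sum_const]
    have h1 : (1:ℝ) ≤ 𝕊.card := by
      have := Finset.card_pos.mpr h𝕊
      exact_mod_cast this
    simpa using h1
  exact hcompact.exists_isMinOn hne (continuous_finset_sum _ fun S _ =>
    continuous_finset_sum _ fun y _ => ((hcont S y).mul continuous_const)).continuousOn

lemma strong_duality (m : Fin d → ℕ) (𝕊 : Finset (Finset (Fin d)))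
    (p : ∀ S : Finset (Fin d), Cell m S → ℝ) (hp : IsFamily m 𝕊 p)
    (μs : Full m → ℝ) (hμs : μs ∈ Feas m 𝕊 p)
    (hmax : IsMaxOn (fun μ => ∑ x, μ x) (Feas m 𝕊 p) μs)
    (gs : ∀ S : Finset (Fin d), Cell m S → ℝ) (hgs : gs ∈ DualD m 𝕊)
    (hmin : IsMinOn (fun g : ∀ S : Finset (Fin d), Cell m S → ℝ =>
      ∑ S ∈ 𝕊, ∑ y, g S y * p S y) (DualD m 𝕊) gs) :
    ∑ S ∈ 𝕊, ∑ y, gs S y * p S y = ∑ x, μs x := by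
  refine le_antisymm ?_ (weak_duality m 𝕊 p μs hμs gs (fun S _ y => (hgs.1 S y).1) hgs.2)
  by_contra hcon
  push_neg at hcon
  obtain ⟨g, hg0, hg1, hglt⟩ := exists_dual_lt m 𝕊 p μs hμs hmax _ hcon
  set g' : ∀ S : Finset (Fin d), Cell m S → ℝ := fun S y => min (g S y) 1 with hg'
  have hg'D : g' ∈ DualD m 𝕊 := by
    refine ⟨fun S y => ⟨le_min (hg0 S y) zero_le_one, min_le_right _ _⟩, fun x => ?_⟩
    by_cases hone : ∃ S₀ ∈ 𝕊, 1 ≤ g S₀ (proj m S₀ x)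
    · obtain ⟨S₀, hS₀, hS₀1⟩ := hone
      have h1 : g' S₀ (proj m S₀ x) = 1 := min_eq_right hS₀1
      calc (1:ℝ) = g' S₀ (proj m S₀ x) := h1.symm
        _ ≤ ∑ S ∈ 𝕊, g' S (proj m S x) := Finset.single_le_sum
            (f := fun S => g' S (proj m S x))
            (fun S _ => le_min (hg0 S _) zero_le_one) hS₀
    · push_neg at hone
      have h1 : ∀ S ∈ 𝕊, g' S (proj m S x) = g S (proj m S x) :=
        fun S hS => min_eq_left (hone S hS).le
      rw [Finset.sum_congr rfl h1]
      exact hg1 x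
  have hle : ∑ S ∈ 𝕊, ∑ y, g' S y * p S y ≤ ∑ S ∈ 𝕊, ∑ y, g S y * p S y := by
    refine Finset.sum_le_sum fun S hS => Finset.sum_le_sum fun y _ => ?_
    exact mul_le_mul_of_nonneg_right (min_le_left _ _) ((hp S hS).1 y)
  have := hmin hg'D
  simp only [Set.mem_setOf_eq] at this
  exact absurd (lt_of_le_of_lt (this.trans hle) hglt) (lt_irrefl _)

end Aux

/-- Proposition: attainment and decomposition. The supremum defining
`R(P_𝕊)` is attained, and `P_𝕊` decomposes as a mixture
`P_𝕊 = (1 - R(P_𝕊))·Q_𝕊 + R(P_𝕊)·T_𝕊` with `Q_𝕊` compatible. -/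
theorem statement_4 {d : ℕ} (m : Fin d → ℕ) (hm : ∀ j, 0 < m j)
    (𝕊 : Finset (Finset (Fin d))) (h𝕊 : 𝕊.Nonempty) (hSne : ∀ S ∈ 𝕊, S.Nonempty)
    (p : ∀ S : Finset (Fin d), Cell m S → ℝ) (hp : IsFamily m 𝕊 p) :
    (∃ f, GPlus m 𝕊 f ∧ RL m 𝕊 p f = Rix m 𝕊 p) ∧
    (∃ q t : ∀ S : Finset (Fin d), Cell m S → ℝ,
      IsFamily m 𝕊 q ∧ Compatible m 𝕊 q ∧ IsFamily m 𝕊 t ∧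
      ∀ S ∈ 𝕊, ∀ y : Cell m S,
        p S y = (1 - Rix m 𝕊 p) * q S y + Rix m 𝕊 p * t S y) := by
  classical
  obtain ⟨μs, hμs, hmax⟩ := exists_maxFeas m 𝕊 p h𝕊 hp
  obtain ⟨gs, hgs, hmin⟩ := exists_minDual m 𝕊 p h𝕊
  have hsd : ∑ S ∈ 𝕊, ∑ y, gs S y * p S y = ∑ x, μs x :=
    strong_duality m 𝕊 p hp μs hμs hmax gs hgs hmin
  set β : ℝ := ∑ x, μs x with hβ
  have hn : (0:ℝ) < (𝕊.card : ℝ) := by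
    exact_mod_cast Finset.card_pos.mpr h𝕊
  have hpsum : ∑ S ∈ 𝕊, ∑ y, p S y = (𝕊.card : ℝ) := by
    rw [Finset.sum_congr rfl (fun S hS => (hp S hS).2)]
    simp
  set fs : ∀ S : Finset (Fin d), Cell m S → ℝ :=
    fun S y => (𝕊.card : ℝ) * gs S y - 1 with hfs
  have hfsG : GPlus m 𝕊 fs := by
    constructor
    · intro S hS y
      have h1 := (hgs.1 S y).1
      have h2 : 0 ≤ (𝕊.card : ℝ) * gs S y := mul_nonneg hn.le h1
      simp only [hfs]
      linarith
    · intro x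
      have h1 : ∑ S ∈ 𝕊, fs S (proj m S x)
          = (𝕊.card : ℝ) * (∑ S ∈ 𝕊, gs S (proj m S x)) - 𝕊.card := by
        simp [hfs, Finset.sum_sub_distrib, Finset.mul_sum]
      rw [h1]
      have h2 := hgs.2 x
      nlinarith
  have hRLfs : RL m 𝕊 p fs = 1 - β := by
    rw [RL]
    have h1 : ∑ S ∈ 𝕊, ∑ y, fs S y * p S y = (𝕊.card : ℝ) * β - 𝕊.card := by
      have h2 : ∀ S ∈ 𝕊, ∑ y, fs S y * p S y
          = (𝕊.card:ℝ) * (∑ y, gs S y * p S y) - ∑ y, p S y := by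
        intro S hS
        rw [Finset.mul_sum, ← Finset.sum_sub_distrib]
        refine Finset.sum_congr rfl fun y _ => ?_
        simp only [hfs]
        ring
      rw [Finset.sum_congr rfl h2, Finset.sum_sub_distrib, ← Finset.mul_sum, hsd, hpsum]
    rw [h1]
    field_simp
    ring
  have hub : ∀ t ∈ {t | ∃ f, GPlus m 𝕊 f ∧ t = RL m 𝕊 p f}, t ≤ 1 - β := by
    rintro t ⟨f, hfG, rfl⟩
    set g : ∀ S : Finset (Fin d), Cell m S → ℝ :=
      fun S y => (f S y + 1) / (𝕊.card : ℝ) with hg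
    have hg0 : ∀ S ∈ 𝕊, ∀ y, 0 ≤ g S y := fun S hS y =>
      div_nonneg (by linarith [hfG.1 S hS y]) hn.le
    have hg1 : ∀ x, 1 ≤ ∑ S ∈ 𝕊, g S (proj m S x) := by
      intro x
      have h2 := hfG.2 x
      have h1 : ∑ S ∈ 𝕊, g S (proj m S x)
          = ((∑ S ∈ 𝕊, f S (proj m S x)) + 𝕊.card) / (𝕊.card : ℝ) := by
        rw [← Finset.sum_div, Finset.sum_add_distrib]
        simp
      rw [h1, le_div_iff₀ hn]
      linarith
    have hwd := weak_duality m 𝕊 p μs hμs g hg0 hg1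
    have hL : ∑ S ∈ 𝕊, ∑ y, g S y * p S y
        = ((∑ S ∈ 𝕊, ∑ y, f S y * p S y) + ∑ S ∈ 𝕊, ∑ y, p S y) / (𝕊.card : ℝ) := by
      rw [← Finset.sum_add_distrib, Finset.sum_div]
      refine Finset.sum_congr rfl fun S _ => ?_
      rw [← Finset.sum_add_distrib, Finset.sum_div]
      refine Finset.sum_congr rfl fun y _ => ?_
      simp only [hg]
      ring
    rw [hL, hpsum, le_div_iff₀ hn] at hwd
    rw [RL]
    rw [show -(1 / (𝕊.card:ℝ)) * (∑ S ∈ 𝕊, ∑ y, f S y * p S y)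
        = -((∑ S ∈ 𝕊, ∑ y, f S y * p S y) / (𝕊.card:ℝ)) by ring]
    rw [neg_le, le_div_iff₀ hn]
    linarith
  have hRix : Rix m 𝕊 p = 1 - β := by
    rw [Rix]
    refine le_antisymm (csSup_le ⟨1 - β, ⟨fs, hfsG, hRLfs.symm⟩⟩ hub)
      (le_csSup ⟨1 - β, hub⟩ ⟨fs, hfsG, hRLfs.symm⟩)
  have hβ0 : 0 ≤ β := Finset.sum_nonneg fun x _ => hμs.1 x
  refine ⟨⟨fs, hfsG, by rw [hRLfs, hRix]⟩, ?_⟩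
  rw [hRix]
  by_cases hb0 : β = 0
  · set x₀ : Full m := fun j => ⟨0, hm j⟩ with hx₀
    set δ₀ : Full m → ℝ := Pi.single x₀ 1 with hδ₀
    have hone : ∀ x, (0:ℝ) ≤ δ₀ x := by
      intro x
      rw [hδ₀, Pi.single_apply]
      split <;> norm_num
    have hsum1 : ∑ x, δ₀ x = 1 := by simp [hδ₀]
    refine ⟨fun S y => margF m δ₀ S y, p, fun S hS => ?_,
      ⟨δ₀, ⟨hone, hsum1⟩, fun S hS y => rfl⟩, hp, fun S hS y => ?_⟩
    · exact ⟨fun y => margF_nonneg hone S y, by rw [sum_margF, hsum1]⟩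
    · rw [hb0]
      ring
  · have hbpos : 0 < β := lt_of_le_of_ne hβ0 (Ne.symm hb0)
    set ν : Full m → ℝ := fun x => μs x / β with hν
    have hν0 : ∀ x, 0 ≤ ν x := fun x => div_nonneg (hμs.1 x) hβ0
    have hνsum : ∑ x, ν x = 1 := by
      show ∑ x, μs x / β = 1
      rw [← Finset.sum_div, ← hβ]
      exact div_self hb0
    set q : ∀ S : Finset (Fin d), Cell m S → ℝ := fun S y => margF m ν S y with hq
    have hqm : ∀ (S : Finset (Fin d)) (y : Cell m S), q S y = margF m μs S y / β := by
      intro S y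
      show margF m ν S y = margF m μs S y / β
      unfold margF
      rw [Finset.sum_div]
      refine Finset.sum_congr rfl fun x _ => ?_
      split <;> simp [hν]
    have hqfam : IsFamily m 𝕊 q := by
      intro S hS
      refine ⟨fun y => margF_nonneg hν0 S y, ?_⟩
      show (∑ y, margF m ν S y) = 1
      rw [sum_margF, hνsum]
    have hqcomp : Compatible m 𝕊 q := ⟨ν, ⟨hν0, hνsum⟩, fun S hS y => rfl⟩
    have hβ1 : β ≤ 1 := by
      obtain ⟨S₀, hS₀⟩ := h𝕊
      have h1 : β = ∑ y, margF m μs S₀ y := by rw [sum_margF]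
      have h2 : ∑ y, margF m μs S₀ y ≤ ∑ y, p S₀ y :=
        Finset.sum_le_sum fun y _ => hμs.2 S₀ hS₀ y
      rw [(hp S₀ hS₀).2] at h2
      linarith
    by_cases hone : β = 1
    · refine ⟨q, q, hqfam, hqcomp, hqfam, fun S hS y => ?_⟩
      have heq : p S y = margF m μs S y := by
        have h1 : ∑ y, (p S y - margF m μs S y) = 0 := by
          rw [Finset.sum_sub_distrib, (hp S hS).2, sum_margF, ← hβ, hone]
          ring
        have h2 := (Finset.sum_eq_zero_iff_of_nonneg
          (fun y _ => sub_nonneg.mpr (hμs.2 S hS y))).mp h1 y (Finset.mem_univ y)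
        linarith
      rw [hqm, heq, hone]
      ring
    · have hρpos : 0 < 1 - β := by
        rcases lt_or_eq_of_le hβ1 with h | h
        · linarith
        · exact absurd h hone
      set t : ∀ S : Finset (Fin d), Cell m S → ℝ :=
        fun S y => (p S y - margF m μs S y) / (1 - β) with ht
      have htfam : IsFamily m 𝕊 t := by
        intro S hS
        constructor
        · intro y
          exact div_nonneg (sub_nonneg.mpr (hμs.2 S hS y)) hρpos.le
        · show ∑ y, (p S y - margF m μs S y) / (1 - β) = 1
          rw [← Finset.sum_div, Finset.sum_sub_distrib, (hp S hS).2, sum_margF, ← hβ]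
          exact div_self (by linarith)
      refine ⟨q, t, hqfam, hqcomp, htfam, fun S hS y => ?_⟩
      rw [hqm]
      show p S y = (1 - (1 - β)) * (margF m μs S y / β)
        + (1 - β) * ((p S y - margF m μs S y) / (1 - β))
      rw [show (1 - (1 - β)) = β by ring]
      rw [mul_comm β _, div_mul_cancel₀ _ hb0, mul_comm (1 - β) _,
        div_mul_cancel₀ _ (ne_of_gt hρpos)]
      ring
end
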